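/- arXiv:1903.00651 — 6 statements merged into one kernel-verified Lean document; each statement's English description precedes it below -/
import Mathlib

section
/- For all z, w in the open unit ball of ℂⁿ, the pseudo-hyperbolic distance satisfies ρ(z,w) = |σ_z(w)| ≤ |z - w| / |1 - ⟨z,w⟩|. -/
open MeasureTheory
open scoped ComplexConjugate ENNReal

noncomputable section
open scoped Classical

/-- Orthogonal projection of `w` onto the complex line spanned by `z`
(with the convention `P_0 = 0`). -/
def Pz {n : ℕ} (z w : EuclideanSpace ℂ (Fin n)) : EuclideanSpace ℂ (Fin n) :=
  if z = 0 then 0 else ((inner ℂ z w : ℂ) / (‖z‖ : ℂ) ^ 2) • z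

/-- `Q_z = I - P_z`. -/
def Qz {n : ℕ} (z w : EuclideanSpace ℂ (Fin n)) : EuclideanSpace ℂ (Fin n) :=
  w - Pz z w

/-- The Möbius automorphism `σ_z` of the unit ball interchanging `0` and `z`:
`σ_z(w) = (z - P_z w - √(1-|z|²) Q_z w)/(1 - ⟨w,z⟩)`.  (Here the paper's
Hermitian product `⟨w,z⟩ = Σ wⱼ conj zⱼ` is Mathlib's `inner z w`.) -/
def moebius {n : ℕ} (z w : EuclideanSpace ℂ (Fin n)) : EuclideanSpace ℂ (Fin n) :=
  (1 - (inner ℂ z w : ℂ))⁻¹ • (z - Pz z w - Real.sqrt (1 - ‖z‖ ^ 2) • Qz z w)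

/-- The pseudo-hyperbolic distance `ρ(z,w) = |σ_z(w)|`. -/
def pseudoDist {n : ℕ} (z w : EuclideanSpace ℂ (Fin n)) : ℝ :=
  ‖moebius z w‖

theorem pseudoDist_le {n : ℕ} (z w : EuclideanSpace ℂ (Fin n))
    (hz : ‖z‖ < 1) (hw : ‖w‖ < 1) :
    pseudoDist z w ≤ ‖z - w‖ / ‖(1 - (inner ℂ w z : ℂ))‖ := by
  have habs : ‖(1 - (inner ℂ w z : ℂ))‖ = ‖(1 - (inner ℂ z w : ℂ))‖ := by
    have hconj : (starRingEnd ℂ) (1 - (inner ℂ w z : ℂ)) = 1 - (inner ℂ z w : ℂ) := by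
      rw [map_sub, map_one, inner_conj_symm]
    rw [← hconj, Complex.norm_conj]
  rw [habs]
  set c : ℂ := 1 - (inner ℂ z w : ℂ) with hc
  set t : ℝ := Real.sqrt (1 - ‖z‖ ^ 2) with ht
  have hnorm : pseudoDist z w = (‖c‖)⁻¹ * ‖z - Pz z w - t • Qz z w‖ := by
    rw [pseudoDist, moebius, norm_smul, norm_inv]
  -- key: ‖z - Pz z w - t • Qz z w‖ ≤ ‖z - w‖
  have hkey : ‖z - Pz z w - t • Qz z w‖ ≤ ‖z - w‖ := by
    by_cases h0 : z = 0
    · subst h0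
      have : t = 1 := by simp [ht]
      simp [Pz, Qz, this]
    · set a := z - Pz z w with ha
      set q := Qz z w with hq
      have horth : (inner ℂ a q : ℂ) = 0 := by
        have hzq : (inner ℂ z q : ℂ) = 0 := by
          have hzr : ‖z‖ ≠ 0 := norm_ne_zero_iff.mpr h0
          have hz2 : ((‖z‖ : ℂ)) ^ 2 ≠ 0 := pow_ne_zero 2 (by exact_mod_cast hzr)
          rw [hq, Qz, Pz, if_neg h0, inner_sub_right, inner_smul_right,
            inner_self_eq_norm_sq_to_K]
          field_simp
          simp [hzr]
        have : a = (1 - (inner ℂ z w : ℂ) / (‖z‖ : ℂ) ^ 2) • z := by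
          rw [ha, Pz, if_neg h0, sub_smul, one_smul]
        rw [this, inner_smul_left, hzq, mul_zero]
      have hz1 : (0:ℝ) ≤ 1 - ‖z‖ ^ 2 := by nlinarith [norm_nonneg z]
      have ht2 : t ^ 2 = 1 - ‖z‖ ^ 2 := Real.sq_sqrt hz1
      have ht1 : t ^ 2 ≤ 1 := by nlinarith [sq_nonneg ‖z‖]
      have hzw : z - w = a - q := by rw [ha, hq, Qz]; abel
      have h1 : ‖a - t • q‖ ^ 2 = ‖a‖ ^ 2 + t ^ 2 * ‖q‖ ^ 2 := by
        have hre : (inner ℂ a (t • q) : ℂ).re = 0 := by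
          have hsm : t • q = (t : ℂ) • q := by
            simp [Complex.coe_smul]
          rw [hsm, inner_smul_right, horth]; simp
        rw [@norm_sub_sq ℂ]
        simp only [RCLike.re_to_complex] at hre ⊢
        rw [hre]
        simp [norm_smul, mul_pow, sq_abs]
      have h2 : ‖a - q‖ ^ 2 = ‖a‖ ^ 2 + ‖q‖ ^ 2 := by
        rw [@norm_sub_sq ℂ, horth]
        simp
      have hle : ‖a - t • q‖ ^ 2 ≤ ‖a - q‖ ^ 2 := by
        rw [h1, h2]
        nlinarith [sq_nonneg ‖q‖]
      rw [hzw]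
      exact (pow_le_pow_iff_left₀ (norm_nonneg _) (norm_nonneg _) two_ne_zero).mp hle
  rw [hnorm, div_eq_inv_mul]
  exact mul_le_mul_of_nonneg_left hkey (inv_nonneg.mpr (norm_nonneg _))
end
end

section
/- In the unit disk of ℂ, for all z, w, a in the disk, the pseudo-hyperbolic distance ρ(z,w) = |(z-w)/(1 - conj(w) z)| satisfies ρ(z,w) ≤ (ρ(z,a) + ρ(a,w)) / (1 + ρ(z,a) ρ(a,w)). -/
open scoped ComplexConjugate

noncomputable section

lemma psd_denom_pos (a z : ℂ) (ha : ‖a‖ < 1) (hz : ‖z‖ < 1) :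
    0 < ‖1 - conj a * z‖ := by
  have h1 : ‖conj a * z‖ = ‖a‖ * ‖z‖ := by
    simp [map_mul]
  have h2 : ‖(1:ℂ)‖ - ‖conj a * z‖ ≤ ‖1 - conj a * z‖ := norm_sub_norm_le _ _
  simp only [norm_one] at h2
  have : 0 ≤ ‖a‖ := norm_nonneg a
  have : 0 ≤ ‖z‖ := norm_nonneg z
  nlinarith [h2, h1]

lemma psd_zero_case (u v : ℂ) (hu : ‖u‖ ≤ 1) (hv : ‖v‖ ≤ 1) :
    ‖u - v‖ * (1 + ‖u‖ * ‖v‖) ≤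
      (‖u‖ + ‖v‖) * ‖1 - conj v * u‖ := by
  set r := ‖u‖ with hr
  set s := ‖v‖ with hs
  have hr0 : 0 ≤ r := norm_nonneg u
  have hs0 : 0 ≤ s := norm_nonneg v
  have hL0 : 0 ≤ ‖u - v‖ * (1 + r * s) := by positivity
  have hR0 : 0 ≤ (r + s) * ‖1 - conj v * u‖ := by positivity
  have key : (‖u - v‖ * (1 + r * s))^2 ≤ ((r + s) * ‖1 - conj v * u‖)^2 := by
    have e1 : (‖u - v‖)^2 = Complex.normSq (u - v) := Complex.sq_norm _
    have e2 : (‖1 - conj v * u‖)^2 = Complex.normSq (1 - conj v * u) := Complex.sq_norm _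
    have er : r^2 = Complex.normSq u := Complex.sq_norm u
    have es : s^2 = Complex.normSq v := Complex.sq_norm v
    have ht : |(conj v * u).re| ≤ s * r := by
      have := Complex.abs_re_le_norm (conj v * u)
      simpa [map_mul] using this
    have ht1 : -(s*r) ≤ (conj v * u).re := (abs_le.mp ht).1
    have hn1 : Complex.normSq (u - v) = Complex.normSq u + Complex.normSq v - 2 * (conj v * u).re := by
      simp [Complex.normSq_apply, Complex.sub_re, Complex.sub_im, Complex.mul_re, Complex.mul_im]
      ring
    have hn2 : Complex.normSq (1 - conj v * u) = 1 - 2 * (conj v * u).re + Complex.normSq u * Complex.normSq v := by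
      simp [Complex.normSq_apply, Complex.sub_re, Complex.sub_im, Complex.mul_re, Complex.mul_im]
      ring
    rw [mul_pow, mul_pow, e1, e2, hn1, hn2, ← er, ← es]
    nlinarith [mul_nonneg (mul_nonneg (by nlinarith : (0:ℝ) ≤ s*r + (conj v * u).re) (by nlinarith : (0:ℝ) ≤ 1 - r^2)) (by nlinarith : (0:ℝ) ≤ 1 - s^2)]
  exact (pow_le_pow_iff_left₀ hL0 hR0 two_ne_zero).mp key

lemma psd_rho_lt_one (a z : ℂ) (ha : ‖a‖ < 1) (hz : ‖z‖ < 1) :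
    ‖a - z‖ < ‖1 - conj a * z‖ := by
  have h1 : Complex.normSq z < 1 := by
    have := Complex.sq_norm z; nlinarith [norm_nonneg z]
  have h2 : Complex.normSq a < 1 := by
    have := Complex.sq_norm a; nlinarith [norm_nonneg a]
  have key : Complex.normSq (a - z) < Complex.normSq (1 - conj a * z) := by
    simp only [Complex.normSq_apply, Complex.sub_re, Complex.sub_im, Complex.mul_re,
      Complex.mul_im, Complex.one_re, Complex.one_im, Complex.conj_re, Complex.conj_im] at *
    nlinarith [h1, h2]
  have := Complex.sq_norm (a - z)
  have := Complex.sq_norm (1 - conj a * z)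
  nlinarith [norm_nonneg (a - z), norm_nonneg (1 - conj a * z)]

/-- The pseudo-hyperbolic distance on the unit disk. -/
def pseudoDistD (z w : ℂ) : ℝ := ‖z - w‖ / ‖1 - conj w * z‖

lemma psd_mobius (z w a : ℂ) (hz : ‖z‖ < 1) (hw : ‖w‖ < 1)
    (ha : ‖a‖ < 1) :
    pseudoDistD ((a - z)/(1 - conj a * z)) ((a - w)/(1 - conj a * w)) = pseudoDistD z w := by
  set A := 1 - conj a * z with hAdef
  set B := 1 - conj a * w with hBdef
  have hApos := psd_denom_pos a z ha hz
  have hBpos := psd_denom_pos a w ha hw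
  have hA : A ≠ 0 := fun h => by simp [← hAdef, h] at hApos
  have hB : B ≠ 0 := fun h => by simp [← hBdef, h] at hBpos
  have hBc : conj B ≠ 0 := fun h => hB (by simpa using congrArg conj h)
  have hDpos := psd_denom_pos w z hw hz
  have hD : (1 - conj w * z) ≠ 0 := fun h => by simp [h] at hDpos
  have h1 : (a - z)/A - (a - w)/B = ((w - z) * (1 - conj a * a))/(A * B) := by
    field_simp
    ring
  have h2 : 1 - conj ((a - w)/B) * ((a - z)/A)
      = ((1 - conj w * z) * (1 - conj a * a))/(conj B * A) := by
    rw [map_div₀]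
    field_simp
    simp only [hBdef, hAdef, map_sub, map_mul, map_one, Complex.conj_conj]
    ring
  have hcpos := psd_denom_pos a a ha ha
  unfold pseudoDistD
  rw [h1, h2, norm_div, norm_div, norm_mul, norm_mul, norm_mul, norm_mul, Complex.norm_conj]
  have hwz : ‖w - z‖ = ‖z - w‖ := by
    rw [← neg_sub, norm_neg]
  rw [hwz]
  field_simp

theorem pseudoDistD_strong_triangle (z w a : ℂ)
    (hz : ‖z‖ < 1) (hw : ‖w‖ < 1) (ha : ‖a‖ < 1) :
    pseudoDistD z w ≤
      (pseudoDistD z a + pseudoDistD a w) / (1 + pseudoDistD z a * pseudoDistD a w) := by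
  set z' := (a - z)/(1 - conj a * z) with hz'def
  set w' := (a - w)/(1 - conj a * w) with hw'def
  have hz' : ‖z'‖ < 1 := by
    rw [hz'def, norm_div, div_lt_one (psd_denom_pos a z ha hz)]
    exact psd_rho_lt_one a z ha hz
  have hw' : ‖w'‖ < 1 := by
    rw [hw'def, norm_div, div_lt_one (psd_denom_pos a w ha hw)]
    exact psd_rho_lt_one a w ha hw
  have hza : pseudoDistD z a = ‖z'‖ := by
    rw [hz'def, norm_div]
    unfold pseudoDistD
    rw [show a - z = -(z - a) by ring, norm_neg]
  have haw : pseudoDistD a w = ‖w'‖ := by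
    rw [hw'def, norm_div]
    unfold pseudoDistD
    congr 1
    rw [← Complex.norm_conj (1 - conj w * a)]
    congr 1
    simp only [map_sub, map_mul, map_one, Complex.conj_conj]
    ring
  rw [← psd_mobius z w a hz hw ha, hza, haw]
  unfold pseudoDistD
  have hdz := psd_denom_pos w' z' hw' hz'
  rw [div_le_div_iff₀ hdz (by positivity)]
  exact psd_zero_case z' w' hz'.le hw'.le
end
end

section
/- For 0 < r < 1 and 0 < s < 1 with s > r, the pseudo-hyperbolic ball Δ(a,r) intersects 𝔹 \ 𝔹_s (i.e., meets the set {|z| ≥ s}) if and only if |a| > (s - r)/(1 - s r). -/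
open MeasureTheory
open scoped ComplexConjugate ENNReal

noncomputable section
open scoped Classical

lemma habs (z : ℂ) : ‖z‖^2 = z.re^2 + z.im^2 := by
  rw [Complex.sq_norm, Complex.normSq_apply]; ring

lemma numsq {n : ℕ} (a w : EuclideanSpace ℂ (Fin n)) (ha : ‖a‖ ≤ 1) :
    ‖a - Pz a w - Real.sqrt (1 - ‖a‖ ^ 2) • Qz a w‖ ^ 2
      = ‖(1 : ℂ) - (inner ℂ a w : ℂ)‖ ^ 2 - (1 - ‖a‖ ^ 2) * (1 - ‖w‖ ^ 2) := by
  by_cases h : a = 0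
  · simp [h, Pz, Qz, norm_smul, habs]
  set α := (inner ℂ a w : ℂ) with hα
  have hx0 : 0 < ‖a‖ := norm_pos_iff.mpr h
  have hA : ((‖a‖ : ℝ) : ℂ) ≠ 0 := Complex.ofReal_ne_zero.mpr hx0.ne'
  have hP : Pz a w = (α / (‖a‖ : ℂ)^2) • a := if_neg h
  have hiaP : (inner ℂ a (Pz a w) : ℂ) = α := by
    rw [hP, inner_smul_right, inner_self_eq_norm_sq_to_K]
    field_simp
    rfl
  have hiaQ : (inner ℂ a (Qz a w) : ℂ) = 0 := by
    rw [Qz, inner_sub_right, hiaP, sub_self]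
  have hiPQ : (inner ℂ (Pz a w) (Qz a w) : ℂ) = 0 := by
    rw [hP, inner_smul_left, hiaQ, mul_zero]
  have hnP : ‖Pz a w‖ = ‖α‖ / ‖a‖ := by
    rw [hP, norm_smul, norm_div, norm_pow, Complex.norm_real, Real.norm_eq_abs,
      abs_of_nonneg (norm_nonneg a)]
    rw [pow_two, ← div_div, div_mul_cancel₀ _ hx0.ne']
  have hw' : Pz a w + Qz a w = w := by simp [Qz]
  have hiQP : (inner ℂ (Qz a w) (Pz a w) : ℂ) = 0 := by
    rw [← inner_conj_symm, hiPQ, map_zero]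
  have hwP : (inner ℂ w (Pz a w) : ℂ) = ((‖Pz a w‖^2 : ℝ) : ℂ) := by
    have h2 : (inner ℂ w (Pz a w) : ℂ) = inner ℂ (Pz a w + Qz a w) (Pz a w) := by rw [hw']
    rw [h2, inner_add_left, hiQP, add_zero, inner_self_eq_norm_sq_to_K]
    norm_cast
  have hc2 : Real.sqrt (1 - ‖a‖^2) ^ 2 = 1 - ‖a‖^2 :=
    Real.sq_sqrt (by nlinarith)
  have hc0 : 0 ≤ Real.sqrt (1 - ‖a‖^2) := Real.sqrt_nonneg _
  have horth : (inner ℂ (a - Pz a w) (Real.sqrt (1 - ‖a‖^2) • Qz a w) : ℂ) = 0 := by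
    rw [RCLike.real_smul_eq_coe_smul (K := ℂ), inner_smul_right, inner_sub_left,
      hiaQ, hiPQ]
    ring
  have hNsq : ‖a - Pz a w - Real.sqrt (1 - ‖a‖^2) • Qz a w‖^2
      = ‖a - Pz a w‖^2 + ‖Real.sqrt (1 - ‖a‖^2) • Qz a w‖^2 := by
    rw [@norm_sub_sq ℂ, horth]
    simp
  have hQ2 : ‖Real.sqrt (1 - ‖a‖^2) • Qz a w‖^2 = (1 - ‖a‖^2) * ‖Qz a w‖^2 := by
    rw [norm_smul, Real.norm_eq_abs, abs_of_nonneg hc0, mul_pow, hc2]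
  have haP2 : ‖a - Pz a w‖^2 = ‖a‖^2 - 2*α.re + ‖Pz a w‖^2 := by
    rw [@norm_sub_sq ℂ, hiaP]
    simp
  have hQsq : ‖Qz a w‖^2 = ‖w‖^2 - ‖Pz a w‖^2 := by
    rw [Qz, @norm_sub_sq ℂ, hwP]
    simp [← Complex.ofReal_pow, Complex.ofReal_re]
    ring
  have hD : ‖(1 : ℂ) - α‖^2 = (1 - α.re)^2 + α.im^2 := by
    rw [habs]
    simp
  have hp2 : ‖α‖^2 = α.re^2 + α.im^2 := habs α
  rw [hNsq, hQ2, haP2, hQsq, hnP, hD, div_pow, hp2]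
  field_simp
  ring

lemma pd_sq {n : ℕ} (a w : EuclideanSpace ℂ (Fin n)) (ha : ‖a‖ ≤ 1) (hw : ‖w‖ ≤ 1) :
    pseudoDist a w ^ 2 * ‖(1 : ℂ) - (inner ℂ a w : ℂ)‖ ^ 2
      = ‖(1 : ℂ) - (inner ℂ a w : ℂ)‖ ^ 2 - (1 - ‖a‖ ^ 2) * (1 - ‖w‖ ^ 2) := by
  have hprod : 0 ≤ (1 - ‖a‖ ^ 2) * (1 - ‖w‖ ^ 2) := by
    have h4 : 0 ≤ 1 - ‖a‖ ^ 2 := by nlinarith [norm_nonneg a]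
    have h5 : 0 ≤ 1 - ‖w‖ ^ 2 := by nlinarith [norm_nonneg w]
    exact mul_nonneg h4 h5
  by_cases hz : (1 : ℂ) - (inner ℂ a w : ℂ) = 0
  · have h1 := numsq a w ha
    rw [hz] at h1 ⊢
    have h2 := sq_nonneg ‖a - Pz a w - Real.sqrt (1 - ‖a‖ ^ 2) • Qz a w‖
    simp only [norm_zero] at h1 ⊢
    nlinarith
  · unfold pseudoDist moebius
    rw [norm_smul, mul_pow, norm_inv]
    have h0 : ‖(1 : ℂ) - (inner ℂ a w : ℂ)‖ ≠ 0 := norm_ne_zero_iff.mpr hz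
    rw [numsq a w ha, mul_right_comm, inv_pow, inv_mul_cancel₀ (pow_ne_zero 2 h0), one_mul]

lemma pd_lower {n : ℕ} (a w : EuclideanSpace ℂ (Fin n)) (ha : ‖a‖ < 1) (hw : ‖w‖ < 1) :
    (‖w‖ - ‖a‖) / (1 - ‖a‖ * ‖w‖) ≤ pseudoDist a w := by
  set x := ‖a‖ with hx
  set y := ‖w‖ with hy
  set d := pseudoDist a w with hd
  set D := ‖(1 : ℂ) - (inner ℂ a w : ℂ)‖ with hD
  have hx0 : 0 ≤ x := norm_nonneg a
  have hy0 : 0 ≤ y := norm_nonneg w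
  have hd0 : 0 ≤ d := norm_nonneg _
  have hxy : x * y < 1 := by nlinarith
  have hDge : 1 - x * y ≤ D := by
    have h1 : ‖(inner ℂ a w : ℂ)‖ ≤ x * y := norm_inner_le_norm a w
    have h2 : ‖(1 : ℂ)‖ - ‖(inner ℂ a w : ℂ)‖ ≤ D := norm_sub_norm_le _ _
    rw [norm_one] at h2
    linarith
  have key : d ^ 2 * D ^ 2 = D ^ 2 - (1 - x ^ 2) * (1 - y ^ 2) := pd_sq a w ha.le hw.le
  have h3 : (1 - d ^ 2) * D ^ 2 = (1 - x ^ 2) * (1 - y ^ 2) := by linarith [key]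
  have hDpos : 0 < D := by linarith
  have h4 : 0 < 1 - x ^ 2 := by nlinarith
  have h5 : 0 < 1 - y ^ 2 := by nlinarith
  have hprodpos : 0 < (1 - x ^ 2) * (1 - y ^ 2) := mul_pos h4 h5
  have hd1 : 0 ≤ 1 - d ^ 2 := by nlinarith
  have hD2 : (1 - x * y) ^ 2 ≤ D ^ 2 := by nlinarith
  have hmain : (y - x) ^ 2 ≤ (d * (1 - x * y)) ^ 2 := by
    nlinarith [mul_nonneg hd1 (sub_nonneg.mpr hD2)]
  have hu : 0 ≤ d * (1 - x * y) := mul_nonneg hd0 (by linarith)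
  rw [div_le_iff₀ (by linarith : (0:ℝ) < 1 - x * y)]
  calc y - x ≤ |y - x| := le_abs_self _
    _ = Real.sqrt ((y - x) ^ 2) := (Real.sqrt_sq_eq_abs _).symm
    _ ≤ Real.sqrt ((d * (1 - x * y)) ^ 2) := Real.sqrt_le_sqrt hmain
    _ = d * (1 - x * y) := by rw [Real.sqrt_sq hu]

lemma pd_smul {n : ℕ} (a : EuclideanSpace ℂ (Fin n)) (h : a ≠ 0) (c : ℝ) :
    pseudoDist a (((c : ℝ) : ℂ) • a) = |1 - c| * ‖a‖ / |1 - c * ‖a‖ ^ 2| := by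
  have hx0 : 0 < ‖a‖ := norm_pos_iff.mpr h
  have hA : ((‖a‖ : ℝ) : ℂ) ≠ 0 := Complex.ofReal_ne_zero.mpr hx0.ne'
  have hin : (inner ℂ a (((c : ℝ) : ℂ) • a) : ℂ) = ((c * ‖a‖ ^ 2 : ℝ) : ℂ) := by
    rw [inner_smul_right, inner_self_eq_norm_sq_to_K]
    push_cast
    norm_num
  have hP : Pz a (((c : ℝ) : ℂ) • a) = ((c : ℝ) : ℂ) • a := by
    rw [Pz, if_neg h, hin]
    congr 1
    push_cast
    field_simp
  have hQ : Qz a (((c : ℝ) : ℂ) • a) = 0 := by rw [Qz, hP, sub_self]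
  unfold pseudoDist moebius
  rw [hin, hP, hQ, smul_zero, sub_zero]
  have hsub : a - ((c : ℝ) : ℂ) • a = (((1 - c : ℝ)) : ℂ) • a := by
    push_cast
    rw [sub_smul, one_smul]
  rw [hsub, norm_smul, norm_smul, norm_inv, Complex.norm_real, Real.norm_eq_abs]
  have hc : ((1 : ℂ) - ((c * ‖a‖ ^ 2 : ℝ) : ℂ)) = (((1 - c * ‖a‖ ^ 2 : ℝ)) : ℂ) := by
    push_cast; ring
  rw [hc, Complex.norm_real, Real.norm_eq_abs]
  field_simp

theorem pseudoBall_meets_annulus_iff {n : ℕ} (a : EuclideanSpace ℂ (Fin n))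
    (ha : ‖a‖ < 1) (r s : ℝ) (hr0 : 0 < r) (hr1 : r < 1) (hs1 : s < 1) (hrs : r < s) :
    ({w : EuclideanSpace ℂ (Fin n) | ‖w‖ < 1 ∧ pseudoDist a w < r} ∩
        {z : EuclideanSpace ℂ (Fin n) | s ≤ ‖z‖}).Nonempty ↔
      (s - r) / (1 - s * r) < ‖a‖ := by
  have hs0 : 0 < s := hr0.trans hrs
  have h1sr : 0 < 1 - s * r := by nlinarith
  have ha0 : 0 ≤ ‖a‖ := norm_nonneg a
  constructor
  · rintro ⟨w, ⟨hw1, hwr⟩, hws⟩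
    have hws' : s ≤ ‖w‖ := hws
    rw [div_lt_iff₀ h1sr]
    by_cases hcase : s ≤ ‖a‖
    · have hxs : ‖a‖ * s < 1 := by nlinarith
      nlinarith [mul_pos hr0 (by linarith : (0:ℝ) < 1 - ‖a‖ * s)]
    · push_neg at hcase
      have hlow := pd_lower a w ha hw1
      have hxy : ‖a‖ * ‖w‖ < 1 := by nlinarith [norm_nonneg w]
      rw [div_le_iff₀ (by linarith : (0:ℝ) < 1 - ‖a‖ * ‖w‖)] at hlow
      have h6 : ‖w‖ - ‖a‖ < r * (1 - ‖a‖ * ‖w‖) := by nlinarith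
      have h7 : 0 ≤ (‖w‖ - s) * (1 + r * ‖a‖) := by
        apply mul_nonneg (by linarith) (by nlinarith)
      nlinarith
  · intro h
    by_cases hcase : s ≤ ‖a‖
    · refine ⟨a, ⟨ha, ?_⟩, hcase⟩
      have hne : a ≠ 0 := by
        intro h0
        rw [h0, norm_zero] at hcase
        linarith
      have := pd_smul a hne 1
      rw [Complex.ofReal_one, one_smul] at this
      rw [this]
      simp
      exact hr0
    · push_neg at hcase
      have hpos : 0 < (s - r) / (1 - s * r) := div_pos (by linarith) h1sr
      have hx0 : 0 < ‖a‖ := hpos.trans h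
      have hne : a ≠ 0 := norm_pos_iff.mp hx0
      refine ⟨((s / ‖a‖ : ℝ) : ℂ) • a, ⟨?_, ?_⟩, ?_⟩
      · rw [norm_smul, Complex.norm_real, Real.norm_eq_abs,
          abs_of_pos (div_pos hs0 hx0), div_mul_cancel₀ _ hx0.ne']
        exact hs1
      · rw [pd_smul a hne]
        have e1 : |1 - s / ‖a‖| * ‖a‖ = s - ‖a‖ := by
          rw [abs_of_neg (by rw [sub_neg]; exact (lt_div_iff₀ hx0).mpr (by linarith))]
          field_simp
          ring
        have e2 : s / ‖a‖ * ‖a‖ ^ 2 = s * ‖a‖ := by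
          field_simp
        have e3 : |1 - s / ‖a‖ * ‖a‖ ^ 2| = 1 - s * ‖a‖ := by
          rw [e2, abs_of_pos (by nlinarith)]
        rw [e1, e3, div_lt_iff₀ (by nlinarith : (0:ℝ) < 1 - s * ‖a‖)]
        rw [div_lt_iff₀ h1sr] at h
        nlinarith
      · rw [Set.mem_setOf_eq, norm_smul, Complex.norm_real, Real.norm_eq_abs,
          abs_of_pos (div_pos hs0 hx0), div_mul_cancel₀ _ hx0.ne']
end
end

section
/- (Khinchine's inequality) For every 0 < p < ∞ there exist constants 0 < A_p ≤ B_p < ∞ such that for all m ∈ ℕ and complex numbers c₁,…,c_m: A_p (Σ |c_j|²)^{p/2} ≤ ∫₀¹ |Σ c_j r_j(t)|^p dt ≤ B_p (Σ |c_j|²)^{p/2}, where r_j(t) = sgn(sin(2^j π t)) are the Rademacher functions. -/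
open scoped Real
open MeasureTheory

noncomputable section

/-- The Rademacher function `r_m(t) = sgn (sin (2^m π t))`. -/
def rademacher (m : ℕ) (t : ℝ) : ℝ := Real.sign (Real.sin (2 ^ m * π * t))

lemma rademacher_eq_on_Ioo {n j i : ℕ} (hjn : j ≤ n) {t : ℝ}
    (h1 : (i : ℝ) / 2 ^ n < t) (h2 : t < ((i : ℝ) + 1) / 2 ^ n) :
    rademacher j t = (-1 : ℝ) ^ (i / 2 ^ (n - j)) := by
  set b : ℕ := 2 ^ (n - j) with hb
  have hb0 : 0 < b := Nat.pow_pos (by norm_num)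
  set K : ℕ := i / b with hK
  have hiK : K * b ≤ i := Nat.div_mul_le_self i b
  have hiK2 : i < (K + 1) * b := by
    have h := Nat.div_add_mod i b
    have h2 := Nat.mod_lt i hb0
    have hexp : (K + 1) * b = b * (i / b) + b := by rw [hK]; ring
    omega
  have h2n : (2 : ℝ) ^ n = 2 ^ j * (b : ℕ) := by
    rw [hb]; push_cast; rw [← pow_add]; congr 1; omega
  have hposj : (0:ℝ) < 2 ^ j := by positivity
  have hposb : (0:ℝ) < (b:ℝ) := by exact_mod_cast hb0
  have hlow : (K : ℝ) < 2 ^ j * t := by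
    have hc : (K : ℝ) * b ≤ i := by exact_mod_cast Nat.cast_le.mpr hiK
    have h1' : (i : ℝ) < 2 ^ j * (b:ℝ) * t := by
      rw [div_lt_iff₀ (by positivity)] at h1; rw [← h2n]; linarith
    nlinarith
  have hhigh : 2 ^ j * t < (K : ℝ) + 1 := by
    have hc : (i : ℝ) + 1 ≤ ((K : ℝ) + 1) * b := by exact_mod_cast Nat.cast_le.mpr hiK2
    have h2' : 2 ^ j * (b:ℝ) * t < (i : ℝ) + 1 := by
      rw [lt_div_iff₀ (by positivity)] at h2; rw [← h2n]; linarith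
    nlinarith
  have harg : (2:ℝ) ^ j * π * t = (2 ^ j * t * π - K * π) + (K:ℕ) * π := by ring
  have hsin : Real.sin (2 ^ j * π * t) = (-1) ^ K * Real.sin (2 ^ j * t * π - K * π) := by
    rw [harg, Real.sin_add_nat_mul_pi]
  have hpos : 0 < Real.sin (2 ^ j * t * π - K * π) := by
    apply Real.sin_pos_of_pos_of_lt_pi
    · nlinarith [Real.pi_pos]
    · nlinarith [Real.pi_pos]
  unfold rademacher
  rw [hsin]
  rcases Nat.even_or_odd K with hE | hO
  · rw [hE.neg_one_pow]
    rw [one_mul, Real.sign_of_pos hpos]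
  · rw [hO.neg_one_pow]
    rw [neg_one_mul, Real.sign_of_neg (by linarith)]


lemma ae_eq_on_Ioc {a b c : ℝ} {f : ℝ → ℝ} (hab : a ≤ b)
    (h : ∀ t ∈ Set.Ioo a b, f t = c) :
    ∀ᵐ t ∂(volume : Measure ℝ), t ∈ Set.uIoc a b → f t = c := by
  have h2 : ∀ᵐ (t : ℝ) ∂(volume : Measure ℝ), t ≠ b := by
    rw [ae_iff]
    simp only [not_not]
    have : {t : ℝ | t = b} = {b} := by ext; simp
    rw [this, Real.volume_singleton]
  filter_upwards [h2] with t ht htm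
  rw [Set.uIoc_of_le hab] at htm
  exact h t ⟨htm.1, lt_of_le_of_ne htm.2 ht⟩

lemma integral_of_const_on_Ioo {a b c : ℝ} {f : ℝ → ℝ} (hab : a ≤ b)
    (h : ∀ t ∈ Set.Ioo a b, f t = c) :
    IntervalIntegrable f volume a b ∧ ∫ t in a..b, f t = c * (b - a) := by
  have hae := ae_eq_on_Ioc hab h
  constructor
  · rw [intervalIntegrable_iff]
    have he : f =ᵐ[volume.restrict (Set.uIoc a b)] (fun _ => c) :=
      (ae_restrict_iff' measurableSet_uIoc).mpr hae
    have hconst : IntegrableOn (fun _ => c) (Set.uIoc a b) volume := by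
      refine MeasureTheory.integrableOn_const ?_
      rw [Set.uIoc_of_le hab]; exact measure_Ioc_lt_top.ne
    exact hconst.congr he.symm
  · rw [intervalIntegral.integral_congr_ae hae, intervalIntegral.integral_const, smul_eq_mul,
      mul_comm]

lemma integral_rademacher (m : ℕ) (F : (Fin m → ℝ) → ℝ) :
    ∫ t in (0:ℝ)..1, F (fun j => rademacher (j.1 + 1) t) =
      ∑ i ∈ Finset.range (2 ^ m),
        ((2:ℝ) ^ m)⁻¹ * F (fun j => (-1 : ℝ) ^ (i / 2 ^ (m - 1 - j.1))) := by
  set N : ℕ := 2 ^ m with hN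
  set f : ℝ → ℝ := fun t => F (fun j => rademacher (j.1 + 1) t) with hf
  set a : ℕ → ℝ := fun i => (i : ℝ) / 2 ^ m with ha
  have hstep : ∀ i < N, IntervalIntegrable f volume (a i) (a (i + 1)) ∧
      ∫ t in a i..a (i+1), f t =
        F (fun j => (-1 : ℝ) ^ (i / 2 ^ (m - 1 - j.1))) * (a (i+1) - a i) := by
    intro i hi
    apply integral_of_const_on_Ioo
    · show (↑i / 2 ^ m : ℝ) ≤ ↑(i+1) / 2 ^ m
      gcongr
      push_cast; linarith
    · intro t ht
      show F (fun j => rademacher (j.1 + 1) t) = _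
      congr 1
      funext j
      have h1 : (i : ℝ) / 2 ^ m < t := ht.1
      have h2 : t < ((i : ℝ) + 1) / 2 ^ m := by
        have := ht.2
        rw [ha] at this
        push_cast at this
        exact this
      have := rademacher_eq_on_Ioo (n := m) (j := j.1 + 1) (i := i)
        (by omega) h1 h2
      rw [this, show m - (j.1+1) = m - 1 - j.1 from by omega]
  have hint : ∀ k < N, IntervalIntegrable f volume (a k) (a (k + 1)) :=
    fun k hk => (hstep k hk).1
  have hsum := intervalIntegral.sum_integral_adjacent_intervals (μ := volume) hint
  have h0 : a 0 = 0 := by simp [ha]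
  have h1 : a N = 1 := by
    rw [ha, hN]; push_cast; exact div_self (by positivity)
  rw [h0, h1] at hsum
  rw [← hsum]
  apply Finset.sum_congr rfl
  intro i hi
  rw [(hstep i (Finset.mem_range.mp hi)).2]
  have : a (i+1) - a i = ((2:ℝ) ^ m)⁻¹ := by
    rw [ha]; push_cast; field_simp; ring
  rw [this, mul_comm]

lemma neg_one_pow_mod_two (x : ℕ) : ((-1 : ℝ)) ^ x = (-1 : ℝ) ^ (x % 2) := by
  rcases Nat.even_or_odd x with h | h
  · rw [h.neg_one_pow, Nat.even_iff.mp h]; norm_num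
  · rw [h.neg_one_pow, Nat.odd_iff.mp h]; norm_num

lemma integral_rademacher' (m : ℕ) (F : (Fin m → ℝ) → ℝ) :
    ∫ t in (0:ℝ)..1, F (fun j => rademacher (j.1 + 1) t) =
      ((2:ℝ) ^ m)⁻¹ * ∑ g : Fin m → Fin 2, F (fun j => (-1 : ℝ) ^ (g j : ℕ)) := by
  rw [integral_rademacher, ← Finset.mul_sum]
  congr 1
  rw [← Fin.sum_univ_eq_sum_range (fun i => F (fun j => (-1 : ℝ) ^ (i / 2 ^ (m - 1 - j.1))))]
  rw [← Equiv.sum_comp (finFunctionFinEquiv (m := 2) (n := m))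
    (fun i : Fin (2 ^ m) => F (fun j => (-1 : ℝ) ^ ((i : ℕ) / 2 ^ (m - 1 - j.1))))]
  have key : ∀ g : Fin m → Fin 2, ∀ j : Fin m,
      (-1 : ℝ) ^ (((finFunctionFinEquiv g : Fin (2^m)) : ℕ) / 2 ^ (m - 1 - j.1)) =
      (-1 : ℝ) ^ ((g (Fin.rev j) : ℕ)) := by
    intro g j
    have h1 : g (Fin.rev j) = (finFunctionFinEquiv.symm (finFunctionFinEquiv g)) (Fin.rev j) := by
      rw [Equiv.symm_apply_apply]
    have hrev : ((Fin.rev j) : ℕ) = m - 1 - j.1 := by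
      rw [Fin.val_rev]; omega
    have h2 : ((g (Fin.rev j)) : ℕ) =
        ((finFunctionFinEquiv g : Fin (2^m)) : ℕ) / 2 ^ (m - 1 - j.1) % 2 := by
      rw [h1, finFunctionFinEquiv_symm_apply_val, hrev]
    rw [h2]
    exact neg_one_pow_mod_two _
  have step1 : ∀ g : Fin m → Fin 2,
      F (fun j => (-1 : ℝ) ^ (((finFunctionFinEquiv g : Fin (2^m)) : ℕ) / 2 ^ (m - 1 - j.1))) =
      F (fun j => (-1 : ℝ) ^ ((g (Fin.rev j) : ℕ))) := by
    intro g; congr 1; funext j; exact key g j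
  simp only [step1]
  have hinv : Function.Involutive (fun g : Fin m → Fin 2 => g ∘ Fin.rev) := by
    intro g; funext j; simp [Function.comp, Fin.rev_rev]
  exact Equiv.sum_comp hinv.toPerm (fun g => F (fun j => (-1 : ℝ) ^ ((g j : ℕ))))

abbrev eps (x : Fin 2) : ℝ := (-1 : ℝ) ^ (x : ℕ)

lemma eps_sq (x : Fin 2) : eps x * eps x = 1 := by
  unfold eps
  rw [← pow_add]
  exact Even.neg_one_pow ⟨(x : ℕ), rfl⟩

lemma card_fun (m : ℕ) : (Finset.univ : Finset (Fin m → Fin 2)).card = 2 ^ m := by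
  rw [Finset.card_univ, Fintype.card_fun]
  simp

lemma sum_eps_orth {m : ℕ} {j k : Fin m} (h : j ≠ k) :
    ∑ g : Fin m → Fin 2, eps (g j) * eps (g k) = 0 := by
  classical
  set f : Fin m → Fin 2 → ℝ :=
    fun l x => if l = j then eps x else if l = k then eps x else 1 with hf
  have key : ∀ g : Fin m → Fin 2, eps (g j) * eps (g k) = ∏ l, f l (g l) := by
    intro g
    rw [← Finset.mul_prod_erase Finset.univ (fun l => f l (g l)) (Finset.mem_univ j)]
    rw [← Finset.mul_prod_erase (Finset.univ.erase j) (fun l => f l (g l))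
      (Finset.mem_erase.mpr ⟨Ne.symm h, Finset.mem_univ k⟩)]
    have h1 : f j (g j) = eps (g j) := by simp [hf]
    have h2 : f k (g k) = eps (g k) := by simp [hf, Ne.symm h]
    have h3 : ∏ l ∈ (Finset.univ.erase j).erase k, f l (g l) = 1 := by
      apply Finset.prod_eq_one
      intro l hl
      have hlk : l ≠ k := (Finset.mem_erase.mp hl).1
      have hlj : l ≠ j := (Finset.mem_erase.mp (Finset.mem_erase.mp hl).2).1
      simp [hf, hlj, hlk]
    rw [h1, h2, h3, mul_one]
  simp_rw [key]
  have : ∑ g : Fin m → Fin 2, ∏ l, f l (g l) = ∏ l, ∑ x : Fin 2, f l x := by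
    rw [Finset.prod_univ_sum]
    rw [Fintype.piFinset_univ]
  rw [this]
  apply Finset.prod_eq_zero (Finset.mem_univ j)
  simp [hf, Fin.sum_univ_two]

lemma real_L2 (m : ℕ) (a : Fin m → ℝ) :
    ∑ g : Fin m → Fin 2, (∑ j, a j * eps (g j)) ^ 2 = 2 ^ m * ∑ j, (a j) ^ 2 := by
  classical
  have expand : ∀ g : Fin m → Fin 2, (∑ j, a j * eps (g j)) ^ 2
      = ∑ j, ∑ k, a j * a k * (eps (g j) * eps (g k)) := by
    intro g
    rw [pow_two, Finset.sum_mul_sum]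
    apply Finset.sum_congr rfl; intro j _
    apply Finset.sum_congr rfl; intro k _
    ring
  simp_rw [expand]
  rw [Finset.sum_comm]
  have swap2 : ∀ j : Fin m, ∑ g : Fin m → Fin 2, ∑ k, a j * a k * (eps (g j) * eps (g k))
      = ∑ k, a j * a k * ∑ g : Fin m → Fin 2, (eps (g j) * eps (g k)) := by
    intro j
    rw [Finset.sum_comm]
    apply Finset.sum_congr rfl; intro k _
    rw [Finset.mul_sum]
  simp_rw [swap2]
  have inner : ∀ j : Fin m, ∑ k, a j * a k * ∑ g : Fin m → Fin 2, (eps (g j) * eps (g k))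
      = 2 ^ m * (a j) ^ 2 := by
    intro j
    rw [Finset.sum_eq_single j]
    · have : ∑ g : Fin m → Fin 2, eps (g j) * eps (g j) = 2 ^ m := by
        have : ∀ g : Fin m → Fin 2, eps (g j) * eps (g j) = 1 := fun g => eps_sq _
        simp_rw [this]
        rw [Finset.sum_const, card_fun]; simp
      rw [this]; ring
    · intro k _ hk
      rw [sum_eps_orth (Ne.symm hk), mul_zero]
    · intro h; exact absurd (Finset.mem_univ j) h
  simp_rw [inner]
  rw [← Finset.mul_sum]

/-- moment constant -/
def Ck (k : ℕ) : ℝ := (Nat.factorial (2 * k) : ℝ) / (Nat.factorial k : ℝ)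

lemma Ck_pos (k : ℕ) : 0 < Ck k := by
  unfold Ck
  positivity

lemma Ck_zero : Ck 0 = 1 := by simp [Ck]

lemma one_le_Ck (k : ℕ) : 1 ≤ Ck k := by
  unfold Ck
  rw [le_div_iff₀ (by positivity), one_mul]
  exact_mod_cast Nat.factorial_le (by omega)

lemma nat_comb (k i : ℕ) (h : i ≤ k) :
    (2 * k).choose (2 * i) * (2 * i).factorial * k.factorial ≤
      (2 * k).factorial * (k.choose i) * i.factorial := by
  have e1 := Nat.choose_mul_factorial_mul_factorial (show 2 * i ≤ 2 * k by omega)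
  have e2 := Nat.choose_mul_factorial_mul_factorial h
  have hfle : (k - i).factorial ≤ (2 * k - 2 * i).factorial :=
    Nat.factorial_le (by omega)
  have hpos : 0 < (2 * k - 2 * i).factorial * (k - i).factorial :=
    Nat.mul_pos (Nat.factorial_pos _) (Nat.factorial_pos _)
  apply Nat.le_of_mul_le_mul_right ?_ hpos
  have hA : (2 * k).choose (2 * i) * (2 * i).factorial * k.factorial *
      ((2 * k - 2 * i).factorial * (k - i).factorial)
      = (2 * k).factorial * k.factorial * (k - i).factorial := by
    calc (2 * k).choose (2 * i) * (2 * i).factorial * k.factorial *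
        ((2 * k - 2 * i).factorial * (k - i).factorial)
        = ((2 * k).choose (2 * i) * (2 * i).factorial * (2 * k - 2 * i).factorial) *
          (k.factorial * (k - i).factorial) := by ring
      _ = (2 * k).factorial * (k.factorial * (k - i).factorial) := by rw [e1]
      _ = (2 * k).factorial * k.factorial * (k - i).factorial := by ring
  have hB : (2 * k).factorial * (k.choose i) * i.factorial *
      ((2 * k - 2 * i).factorial * (k - i).factorial)
      = (2 * k).factorial * k.factorial * (2 * k - 2 * i).factorial := by
    calc (2 * k).factorial * (k.choose i) * i.factorial *
        ((2 * k - 2 * i).factorial * (k - i).factorial)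
        = (2 * k).factorial * (k.choose i * i.factorial * (k - i).factorial) *
          (2 * k - 2 * i).factorial := by ring
      _ = (2 * k).factorial * k.factorial * (2 * k - 2 * i).factorial := by rw [e2]
  rw [hA, hB]
  exact Nat.mul_le_mul_left _ hfle

lemma comb_real (k i : ℕ) (h : i ≤ k) :
    ((2 * k).choose (2 * i) : ℝ) * Ck i ≤ Ck k * (k.choose i : ℝ) := by
  unfold Ck
  rw [mul_div_assoc', div_mul_eq_mul_div, div_le_div_iff₀ (by positivity) (by positivity)]
  exact_mod_cast nat_comb k i h

lemma sum_range_even_odd (k : ℕ) (h : ℕ → ℝ) :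
    ∑ j ∈ Finset.range (2 * k + 1), h j =
      ∑ i ∈ Finset.range (k + 1), h (2 * i) + ∑ i ∈ Finset.range k, h (2 * i + 1) := by
  induction k with
  | zero => simp
  | succ n ih =>
    have h1 : 2 * (n + 1) + 1 = (2 * n + 1) + 1 + 1 := by ring
    rw [h1, Finset.sum_range_succ, Finset.sum_range_succ, ih,
      Finset.sum_range_succ (fun i => h (2 * i)) (n + 1),
      Finset.sum_range_succ (fun i => h (2 * i + 1)) n]
    have e1 : 2 * n + 1 + 1 = 2 * (n + 1) := by ring
    rw [e1]
    ring

lemma eps_zero : eps 0 = 1 := by simp [eps]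
lemma eps_one : eps 1 = -1 := by simp [eps]

lemma binom_even (Y α : ℝ) (k : ℕ) :
    (Y + α) ^ (2 * k) + (Y - α) ^ (2 * k) =
      ∑ i ∈ Finset.range (k + 1),
        2 * ((2 * k).choose (2 * i) : ℝ) * Y ^ (2 * i) * α ^ (2 * (k - i)) := by
  have hsub : Y - α = Y + (-α) := by ring
  rw [add_pow Y α (2 * k), hsub, add_pow Y (-α) (2 * k), ← Finset.sum_add_distrib]
  have hterm : ∀ j ∈ Finset.range (2 * k + 1),
      Y ^ j * α ^ (2 * k - j) * ((2 * k).choose j : ℝ) +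
        Y ^ j * (-α) ^ (2 * k - j) * ((2 * k).choose j : ℝ) =
      Y ^ j * α ^ (2 * k - j) * ((2 * k).choose j : ℝ) * (1 + (-1 : ℝ) ^ j) := by
    intro j hj
    have hj' : j ≤ 2 * k := by
      have := Finset.mem_range.mp hj; omega
    have : (-α) ^ (2 * k - j) = (-1 : ℝ) ^ j * α ^ (2 * k - j) := by
      rw [neg_pow]
      have : (-1 : ℝ) ^ (2 * k - j) = (-1 : ℝ) ^ j := by
        rcases Nat.even_or_odd j with hE | hO
        · obtain ⟨r, hr⟩ := hE
          rw [Even.neg_one_pow ⟨r, hr⟩, Even.neg_one_pow ⟨k - r, by omega⟩]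
        · obtain ⟨r, hr⟩ := hO
          rw [Odd.neg_one_pow ⟨r, hr⟩, Odd.neg_one_pow ⟨k - r - 1, by omega⟩]
      rw [this]
    rw [this]; ring
  rw [Finset.sum_congr rfl hterm, sum_range_even_odd k
    (fun j => Y ^ j * α ^ (2 * k - j) * ((2 * k).choose j : ℝ) * (1 + (-1 : ℝ) ^ j))]
  have hodd : ∑ i ∈ Finset.range k,
      Y ^ (2 * i + 1) * α ^ (2 * k - (2 * i + 1)) * ((2 * k).choose (2 * i + 1) : ℝ) *
        (1 + (-1 : ℝ) ^ (2 * i + 1)) = 0 := by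
    apply Finset.sum_eq_zero
    intro i _
    rw [Odd.neg_one_pow ⟨i, by ring⟩]
    ring
  rw [hodd, add_zero]
  apply Finset.sum_congr rfl
  intro i hi
  have hik : i ≤ k := by have := Finset.mem_range.mp hi; omega
  rw [Even.neg_one_pow ⟨i, by ring⟩, show 2 * k - 2 * i = 2 * (k - i) from by omega]
  ring

lemma moment_bound : ∀ (m k : ℕ) (a : Fin m → ℝ),
    ∑ g : Fin m → Fin 2, (∑ j, a j * eps (g j)) ^ (2 * k) ≤
      2 ^ m * Ck k * (∑ j, (a j) ^ 2) ^ k := by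
  intro m
  induction m with
  | zero =>
    intro k a
    rcases Nat.eq_zero_or_pos k with rfl | hk
    · simp [Ck_zero]
    · have h1 : (2 : ℕ) * k ≠ 0 := by omega
      simp [zero_pow h1, zero_pow (by omega : k ≠ 0)]
  | succ n ih =>
    intro k a
    set α : ℝ := a 0 with hα
    set a' : Fin n → ℝ := fun j => a j.succ with ha'
    set Y : (Fin n → Fin 2) → ℝ := fun g' => ∑ j, a' j * eps (g' j) with hY
    set V' : ℝ := ∑ j, (a' j) ^ 2 with hV'
    have hsplit : ∑ g : Fin (n+1) → Fin 2, (∑ j, a j * eps (g j)) ^ (2*k)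
        = ∑ g' : Fin n → Fin 2, ((Y g' + α) ^ (2*k) + (Y g' - α) ^ (2*k)) := by
      rw [← Equiv.sum_comp (Fin.consEquiv (fun _ : Fin (n+1) => Fin 2))
        (fun g => (∑ j, a j * eps (g j)) ^ (2*k)), Fintype.sum_prod_type]
      rw [Fin.sum_univ_two]
      rw [← Finset.sum_add_distrib]
      apply Finset.sum_congr rfl
      intro g' _
      have e0 : ∀ (x : Fin 2), ∑ j, a j * eps ((Fin.consEquiv (fun _ : Fin (n+1) => Fin 2)) (x, g') j)
          = α * eps x + Y g' := by
        intro x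
        rw [Fin.sum_univ_succ]
        simp only [Fin.consEquiv_apply, Fin.cons_zero, Fin.cons_succ]
        rfl
      rw [e0 0, e0 1, eps_zero, eps_one]
      ring_nf
    rw [hsplit]
    have hbin : ∀ g' : Fin n → Fin 2, (Y g' + α) ^ (2*k) + (Y g' - α) ^ (2*k)
        = ∑ i ∈ Finset.range (k+1),
            2 * ((2 * k).choose (2 * i) : ℝ) * (Y g') ^ (2 * i) * α ^ (2 * (k - i)) :=
      fun g' => binom_even (Y g') α k
    rw [Finset.sum_congr rfl (fun g' _ => hbin g'), Finset.sum_comm]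
    have hswap : ∀ i ∈ Finset.range (k+1),
        ∑ g' : Fin n → Fin 2, 2 * ((2 * k).choose (2 * i) : ℝ) * (Y g') ^ (2 * i) * α ^ (2 * (k - i))
        = 2 * ((2 * k).choose (2 * i) : ℝ) * α ^ (2 * (k - i)) *
            ∑ g' : Fin n → Fin 2, (Y g') ^ (2 * i) := by
      intro i _
      rw [Finset.mul_sum]
      apply Finset.sum_congr rfl
      intro g' _
      ring
    rw [Finset.sum_congr rfl hswap]
    have hstep : ∀ i ∈ Finset.range (k+1),
        2 * ((2 * k).choose (2 * i) : ℝ) * α ^ (2 * (k - i)) *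
            ∑ g' : Fin n → Fin 2, (Y g') ^ (2 * i)
        ≤ 2 ^ (n+1) * Ck k * (V' ^ i * (α ^ 2) ^ (k - i) * (k.choose i : ℝ)) := by
      intro i hi
      have hik : i ≤ k := by have := Finset.mem_range.mp hi; omega
      have hco : (0:ℝ) ≤ 2 * ((2 * k).choose (2 * i) : ℝ) * α ^ (2 * (k - i)) := by
        have : α ^ (2 * (k - i)) = (α ^ 2) ^ (k - i) := by rw [pow_mul]
        rw [this]; positivity
      have h1 : 2 * ((2 * k).choose (2 * i) : ℝ) * α ^ (2 * (k - i)) *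
            ∑ g' : Fin n → Fin 2, (Y g') ^ (2 * i)
          ≤ 2 * ((2 * k).choose (2 * i) : ℝ) * α ^ (2 * (k - i)) * (2 ^ n * Ck i * V' ^ i) :=
        mul_le_mul_of_nonneg_left (ih i a') hco
      apply le_trans h1
      have hVnn : (0:ℝ) ≤ V' := by
        rw [hV']; positivity
      have h2 : ((2 * k).choose (2 * i) : ℝ) * Ck i ≤ Ck k * (k.choose i : ℝ) :=
        comb_real k i hik
      have hαp : α ^ (2 * (k - i)) = (α ^ 2) ^ (k - i) := by rw [pow_mul]
      rw [hαp]
      calc 2 * ((2 * k).choose (2 * i) : ℝ) * (α ^ 2) ^ (k - i) * (2 ^ n * Ck i * V' ^ i)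
          = 2 * 2 ^ n * (((2 * k).choose (2 * i) : ℝ) * Ck i) *
              ((α ^ 2) ^ (k - i) * V' ^ i) := by ring
        _ ≤ 2 * 2 ^ n * (Ck k * (k.choose i : ℝ)) * ((α ^ 2) ^ (k - i) * V' ^ i) := by
            apply mul_le_mul_of_nonneg_right (mul_le_mul_of_nonneg_left h2 (by positivity))
            positivity
        _ = 2 ^ (n+1) * Ck k * (V' ^ i * (α ^ 2) ^ (k - i) * (k.choose i : ℝ)) := by ring
    apply le_trans (Finset.sum_le_sum hstep)
    rw [← Finset.mul_sum, ← add_pow]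
    have hsum : ∑ j, (a j) ^ 2 = V' + α ^ 2 := by
      rw [Fin.sum_univ_succ, hV', hα, ha', add_comm]
    rw [hsum]

def Dk (k : ℕ) : ℝ := 2 ^ (k + 1) * Ck k

lemma Dk_pos (k : ℕ) : 0 < Dk k := by
  unfold Dk; have := Ck_pos k; positivity

lemma one_le_Dk (k : ℕ) : 1 ≤ Dk k := by
  unfold Dk
  have h1 : (1:ℝ) ≤ 2 ^ (k+1) := one_le_pow₀ (by norm_num)
  nlinarith [one_le_Ck k]

section complexfacts

variable {m : ℕ} (c : Fin m → ℂ)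

lemma mul_ofReal_re (z : ℂ) (r : ℝ) : (z * (r : ℂ)).re = z.re * r := by
  simp [Complex.mul_re]

lemma mul_ofReal_im (z : ℂ) (r : ℝ) : (z * (r : ℂ)).im = z.im * r := by
  simp [Complex.mul_im]

lemma re_T (g : Fin m → Fin 2) :
    (∑ j, c j * ((eps (g j) : ℝ) : ℂ)).re = ∑ j, (c j).re * eps (g j) := by
  rw [Complex.re_sum]
  apply Finset.sum_congr rfl
  intro j _
  exact mul_ofReal_re _ _

lemma im_T (g : Fin m → Fin 2) :
    (∑ j, c j * ((eps (g j) : ℝ) : ℂ)).im = ∑ j, (c j).im * eps (g j) := by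
  rw [Complex.im_sum]
  apply Finset.sum_congr rfl
  intro j _
  exact mul_ofReal_im _ _

lemma abs_sq_T (g : Fin m → Fin 2) :
    ‖∑ j, c j * ((eps (g j) : ℝ) : ℂ)‖ ^ 2 =
      (∑ j, (c j).re * eps (g j)) ^ 2 + (∑ j, (c j).im * eps (g j)) ^ 2 := by
  rw [Complex.sq_norm, Complex.normSq_apply, re_T, im_T]
  ring

lemma V_split : ∑ j, ‖c j‖ ^ 2 =
    (∑ j, ((c j).re) ^ 2) + (∑ j, ((c j).im) ^ 2) := by
  rw [← Finset.sum_add_distrib]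
  apply Finset.sum_congr rfl
  intro j _
  rw [Complex.sq_norm, Complex.normSq_apply]
  ring

lemma complex_L2 :
    ∑ g : Fin m → Fin 2, ‖∑ j, c j * ((eps (g j) : ℝ) : ℂ)‖ ^ 2 =
      2 ^ m * ∑ j, ‖c j‖ ^ 2 := by
  simp_rw [abs_sq_T c]
  rw [Finset.sum_add_distrib, real_L2 m (fun j => (c j).re), real_L2 m (fun j => (c j).im),
    V_split c]
  ring

lemma add_pow_le' {x y : ℝ} (hx : 0 ≤ x) (hy : 0 ≤ y) (k : ℕ) :
    (x + y) ^ k ≤ 2 ^ k * (x ^ k + y ^ k) := by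
  have h1 : x + y ≤ 2 * max x y := by
    rcases le_total x y with h | h
    · rw [max_eq_right h]; linarith
    · rw [max_eq_left h]; linarith
  have h2 : (x + y) ^ k ≤ (2 * max x y) ^ k :=
    pow_le_pow_left₀ (by positivity) h1 k
  rw [mul_pow] at h2
  apply le_trans h2
  apply mul_le_mul_of_nonneg_left ?_ (by positivity)
  rcases le_total x y with h | h
  · rw [max_eq_right h]
    exact le_add_of_nonneg_left (by positivity)
  · rw [max_eq_left h]
    exact le_add_of_nonneg_right (by positivity)

lemma complex_moment (k : ℕ) :
    ∑ g : Fin m → Fin 2, ‖∑ j, c j * ((eps (g j) : ℝ) : ℂ)‖ ^ (2 * k) ≤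
      2 ^ m * Dk k * (∑ j, ‖c j‖ ^ 2) ^ k := by
  set X : (Fin m → Fin 2) → ℝ := fun g => ∑ j, (c j).re * eps (g j) with hX
  set Y : (Fin m → Fin 2) → ℝ := fun g => ∑ j, (c j).im * eps (g j) with hY
  have habs : ∀ g, ‖∑ j, c j * ((eps (g j) : ℝ) : ℂ)‖ ^ (2 * k) =
      (X g ^ 2 + Y g ^ 2) ^ k := by
    intro g
    rw [pow_mul, abs_sq_T c]
  simp_rw [habs]
  have hstep : ∀ g : Fin m → Fin 2, (X g ^ 2 + Y g ^ 2) ^ k ≤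
      2 ^ k * ((X g ^ 2) ^ k + (Y g ^ 2) ^ k) :=
    fun g => add_pow_le' (sq_nonneg _) (sq_nonneg _) k
  apply le_trans (Finset.sum_le_sum (fun g _ => hstep g))
  have hre : ∀ g : Fin m → Fin 2, (X g ^ 2) ^ k = X g ^ (2 * k) := by
    intro g; rw [← pow_mul]
  have him : ∀ g : Fin m → Fin 2, (Y g ^ 2) ^ k = Y g ^ (2 * k) := by
    intro g; rw [← pow_mul]
  simp_rw [← Finset.mul_sum, Finset.sum_add_distrib]
  simp_rw [hre, him]
  set V : ℝ := ∑ j, ‖c j‖ ^ 2 with hV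
  have hVx : ∑ j, ((c j).re) ^ 2 ≤ V := by
    rw [hV, V_split c]
    have : (0:ℝ) ≤ ∑ j, ((c j).im) ^ 2 := by positivity
    linarith
  have hVy : ∑ j, ((c j).im) ^ 2 ≤ V := by
    rw [hV, V_split c]
    have : (0:ℝ) ≤ ∑ j, ((c j).re) ^ 2 := by positivity
    linarith
  have hV0 : (0:ℝ) ≤ V := by
    rw [hV]; positivity
  have h1 : ∑ g : Fin m → Fin 2, X g ^ (2 * k) ≤ 2 ^ m * Ck k * V ^ k := by
    apply le_trans (moment_bound m k (fun j => (c j).re))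
    apply mul_le_mul_of_nonneg_left (pow_le_pow_left₀ (by positivity) hVx k)
    have := Ck_pos k; positivity
  have h2 : ∑ g : Fin m → Fin 2, Y g ^ (2 * k) ≤ 2 ^ m * Ck k * V ^ k := by
    apply le_trans (moment_bound m k (fun j => (c j).im))
    apply mul_le_mul_of_nonneg_left (pow_le_pow_left₀ (by positivity) hVy k)
    have := Ck_pos k; positivity
  have : (2:ℝ) ^ k * (∑ g : Fin m → Fin 2, X g ^ (2 * k) + ∑ g : Fin m → Fin 2, Y g ^ (2 * k))
      ≤ 2 ^ k * (2 ^ m * Ck k * V ^ k + 2 ^ m * Ck k * V ^ k) := by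
    apply mul_le_mul_of_nonneg_left (by linarith) (by positivity)
  apply le_trans this
  unfold Dk
  ring_nf
  exact le_refl _
end complexfacts

theorem khinchine_inequality (p : ℝ) (hp : 0 < p) :
    ∃ A B : ℝ, 0 < A ∧ A ≤ B ∧
      ∀ (m : ℕ) (c : Fin m → ℂ),
        A * (∑ j, ‖c j‖ ^ 2) ^ (p / 2) ≤
            (∫ t in (0 : ℝ)..1,
              ‖∑ j, c j * (rademacher (j.1 + 1) t : ℂ)‖ ^ p) ∧
          (∫ t in (0 : ℝ)..1,
              ‖∑ j, c j * (rademacher (j.1 + 1) t : ℂ)‖ ^ p) ≤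
            B * (∑ j, ‖c j‖ ^ 2) ^ (p / 2) := by
  classical
  set k : ℕ := max 2 ⌈p / 2⌉₊ with hk
  have hk2 : 2 ≤ k := le_max_left _ _
  have hkR : (2:ℝ) ≤ (k:ℝ) := by exact_mod_cast hk2
  have hkpos : (0:ℝ) < (k:ℝ) := by linarith
  have hkp : p ≤ 2 * (k:ℝ) := by
    have h1 : p / 2 ≤ (⌈p / 2⌉₊ : ℝ) := Nat.le_ceil _
    have h2 : ((⌈p / 2⌉₊ : ℕ) : ℝ) ≤ (k:ℝ) := by
      exact_mod_cast le_max_right 2 ⌈p / 2⌉₊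
    linarith
  set B : ℝ := (Dk k) ^ (p / (2 * (k:ℝ))) with hB
  set A : ℝ := min 1 (((Dk 2) ^ ((2 - p) / 2))⁻¹) with hA
  have hA0 : 0 < A :=
    lt_min one_pos (inv_pos.mpr (Real.rpow_pos_of_pos (Dk_pos 2) _))
  have hA1 : A ≤ 1 := min_le_left _ _
  have hB1 : 1 ≤ B := Real.one_le_rpow (one_le_Dk k) (by positivity)
  refine ⟨A, B, hA0, le_trans hA1 hB1, ?_⟩
  intro m c
  set V : ℝ := ∑ j, ‖c j‖ ^ 2 with hV
  have hV0 : (0:ℝ) ≤ V := by rw [hV]; positivity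
  set N : ℝ := (2:ℝ) ^ m with hN
  have hN0 : (0:ℝ) < N := by rw [hN]; positivity
  set T : (Fin m → Fin 2) → ℂ := fun g => ∑ j, c j * ((eps (g j) : ℝ) : ℂ) with hT
  -- the integral identity
  have hI : (∫ t in (0 : ℝ)..1,
        ‖∑ j, c j * (rademacher (j.1 + 1) t : ℂ)‖ ^ p) =
      N⁻¹ * ∑ g : Fin m → Fin 2, ‖T g‖ ^ p :=
    integral_rademacher' m (fun v => ‖∑ j, c j * ((v j : ℝ) : ℂ)‖ ^ p)
  have habs0 : ∀ g : Fin m → Fin 2, (0:ℝ) ≤ ‖T g‖ := fun g => norm_nonneg _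
  have hsumw : ∑ _g : Fin m → Fin 2, N⁻¹ = 1 := by
    rw [Finset.sum_const, Finset.card_univ, Fintype.card_fun]
    simp only [Fintype.card_fin, nsmul_eq_mul, hN]
    push_cast
    rw [mul_inv_cancel₀ (by positivity)]
  have hI0 : (0:ℝ) ≤ N⁻¹ * ∑ g : Fin m → Fin 2, ‖T g‖ ^ p := by
    apply mul_nonneg (inv_nonneg.mpr hN0.le)
    apply Finset.sum_nonneg
    intro g _
    exact Real.rpow_nonneg (habs0 g) p
  constructor
  · -- LOWER BOUND
    rw [hI]
    rcases le_or_gt 2 p with hp2 | hp2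
    · -- p ≥ 2 : power mean
      have hmean := Real.rpow_arith_mean_le_arith_mean_rpow Finset.univ
        (fun _ : Fin m → Fin 2 => N⁻¹) (fun g => ‖T g‖ ^ (2:ℕ))
        (fun i _ => inv_nonneg.mpr hN0.le) hsumw (fun i _ => by positivity)
        (p := p / 2) (by linarith)
      have hL : ∑ g : Fin m → Fin 2, N⁻¹ * ‖T g‖ ^ (2:ℕ) = V := by
        rw [← Finset.mul_sum, complex_L2 c, ← hV, ← hN]
        field_simp
      have hR : ∀ g : Fin m → Fin 2,
          (‖T g‖ ^ (2:ℕ)) ^ (p/2) = ‖T g‖ ^ p := by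
        intro g
        rw [← Real.rpow_natCast (‖T g‖) 2, ← Real.rpow_mul (habs0 g)]
        congr 1
        push_cast
        ring
      rw [hL] at hmean
      simp_rw [hR] at hmean
      rw [← Finset.mul_sum] at hmean
      calc A * V ^ (p/2) ≤ 1 * V ^ (p/2) := by
            apply mul_le_mul_of_nonneg_right hA1 (Real.rpow_nonneg hV0 _)
        _ = V ^ (p/2) := one_mul _
        _ ≤ N⁻¹ * ∑ g : Fin m → Fin 2, ‖T g‖ ^ p := hmean
    · -- p < 2 : interpolation via Hölder
      set θ : ℝ := 2 / (4 - p) with hθ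
      have h4p : (0:ℝ) < 4 - p := by linarith
      have hθ0 : 0 < θ := by rw [hθ]; positivity
      have hθ1 : θ < 1 := by
        rw [hθ, div_lt_one h4p]; linarith
      have h1θ : 0 < 1 - θ := by linarith
      -- Hölder
      have hpq : Real.HolderConjugate (1/θ) (1/(1-θ)) := by
        constructor
        · rw [one_div, one_div, inv_inv, inv_inv, inv_one]; ring
        · exact one_div_pos.mpr hθ0
        · exact one_div_pos.mpr h1θ
      have hθne : θ ≠ 0 := ne_of_gt hθ0
      have h1θne : (1:ℝ) - θ ≠ 0 := ne_of_gt h1θ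
      have hf0 : ∀ i : Fin m → Fin 2, (0:ℝ) ≤ N⁻¹ * ‖T i‖ ^ p :=
        fun i => mul_nonneg (le_of_lt (inv_pos.mpr hN0)) (Real.rpow_nonneg (habs0 i) p)
      have hg0 : ∀ i : Fin m → Fin 2, (0:ℝ) ≤ N⁻¹ * ‖T i‖ ^ (4:ℕ) :=
        fun i => mul_nonneg (inv_nonneg.mpr hN0.le) (by positivity)
      have hold := Real.inner_le_Lp_mul_Lq_of_nonneg (s := Finset.univ) hpq
        (f := fun g : Fin m → Fin 2 => (N⁻¹ * ‖T g‖ ^ p) ^ θ)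
        (g := fun g : Fin m → Fin 2 => (N⁻¹ * ‖T g‖ ^ (4:ℕ)) ^ (1-θ))
        (fun i _ => Real.rpow_nonneg (hf0 i) θ)
        (fun i _ => Real.rpow_nonneg (hg0 i) (1-θ))
      have hfP : ∀ i : Fin m → Fin 2,
          (((N⁻¹ * ‖T i‖ ^ p) ^ θ) ^ (1/θ) : ℝ) = N⁻¹ * ‖T i‖ ^ p := by
        intro i
        rw [one_div, Real.rpow_rpow_inv (hf0 i) hθne]
      have hgQ : ∀ i : Fin m → Fin 2,
          (((N⁻¹ * ‖T i‖ ^ (4:ℕ)) ^ (1-θ)) ^ (1/(1-θ)) : ℝ) =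
            N⁻¹ * ‖T i‖ ^ (4:ℕ) := by
        intro i
        rw [one_div, Real.rpow_rpow_inv (hg0 i) h1θne]
      have hexp2 : p * θ + 4 * (1 - θ) = 2 := by
        rw [hθ]
        field_simp
        ring
      have hfg : ∀ i : Fin m → Fin 2,
          ((N⁻¹ * ‖T i‖ ^ p) ^ θ) * ((N⁻¹ * ‖T i‖ ^ (4:ℕ)) ^ (1-θ))
            = N⁻¹ * ‖T i‖ ^ (2:ℕ) := by
        intro i
        rw [Real.mul_rpow (le_of_lt (inv_pos.mpr hN0)) (Real.rpow_nonneg (habs0 i) p),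
          Real.mul_rpow (le_of_lt (inv_pos.mpr hN0)) (by positivity)]
        have hNsplit : (N⁻¹:ℝ) ^ θ * (N⁻¹:ℝ) ^ (1-θ) = N⁻¹ := by
          rw [← Real.rpow_add (inv_pos.mpr hN0)]
          norm_num
        have hexp2' : p * θ + ((4:ℕ):ℝ) * (1-θ) = 2 := by push_cast; exact hexp2
        have habs : ((‖T i‖ ^ p) ^ θ : ℝ) * ((‖T i‖ ^ (4:ℕ)) ^ (1-θ))
            = ‖T i‖ ^ (2:ℕ) := by
          rw [← Real.rpow_natCast (‖T i‖) 4, ← Real.rpow_mul (habs0 i),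
            ← Real.rpow_mul (habs0 i), ← Real.rpow_add' (habs0 i) (by rw [hexp2']; norm_num),
            hexp2', ← Real.rpow_natCast (‖T i‖) 2]
          norm_num
        calc (N⁻¹:ℝ) ^ θ * (‖T i‖ ^ p) ^ θ *
              ((N⁻¹:ℝ) ^ (1-θ) * (‖T i‖ ^ (4:ℕ)) ^ (1-θ))
            = ((N⁻¹:ℝ) ^ θ * (N⁻¹:ℝ) ^ (1-θ)) *
              ((‖T i‖ ^ p) ^ θ * (‖T i‖ ^ (4:ℕ)) ^ (1-θ)) := by ring
          _ = N⁻¹ * ‖T i‖ ^ (2:ℕ) := by rw [hNsplit, habs]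
      simp only [hfP, hgQ, hfg, one_div_one_div] at hold
      have hL2 : ∑ i : Fin m → Fin 2, N⁻¹ * ‖T i‖ ^ (2:ℕ) = V := by
        rw [← Finset.mul_sum, complex_L2 c, ← hV, ← hN]
        field_simp
      rw [hL2, ← Finset.mul_sum, ← Finset.mul_sum] at hold
      -- bound fourth moment
      have h4 : N⁻¹ * ∑ i : Fin m → Fin 2, ‖T i‖ ^ (4:ℕ) ≤ Dk 2 * V ^ 2 := by
        have hcm := complex_moment c 2
        rw [← hV, ← hN] at hcm
        rw [show (4:ℕ) = 2*2 from rfl]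
        calc N⁻¹ * ∑ i : Fin m → Fin 2, ‖T i‖ ^ (2*2:ℕ)
            ≤ N⁻¹ * (N * Dk 2 * V ^ 2) := mul_le_mul_of_nonneg_left hcm (inv_nonneg.mpr hN0.le)
          _ = Dk 2 * V ^ 2 := by field_simp
      set I : ℝ := N⁻¹ * ∑ g : Fin m → Fin 2, ‖T g‖ ^ p with hIdef
      have hIN : (0:ℝ) ≤ I := hI0
      have hkey : V ≤ I ^ θ * (Dk 2 * V ^ 2) ^ (1-θ) := by
        apply le_trans hold
        apply mul_le_mul_of_nonneg_left ?_ (Real.rpow_nonneg hIN θ)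
        exact Real.rpow_le_rpow (by positivity) h4 (le_of_lt h1θ)
      rcases eq_or_lt_of_le hV0 with hVzero | hVpos
      · rw [← hVzero, Real.zero_rpow (by positivity : p/2 ≠ 0), mul_zero]
        exact hIN
      · -- V > 0
        set D : ℝ := Dk 2 with hD
        have hD0 : (0:ℝ) < D := Dk_pos 2
        have hW0 : (0:ℝ) < (D * V ^ 2) ^ (1-θ) :=
          Real.rpow_pos_of_pos (mul_pos hD0 (pow_pos hVpos 2)) _
        have hdiv : V / (D * V ^ 2) ^ (1-θ) ≤ I ^ θ := by
          rw [div_le_iff₀ hW0]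
          exact hkey
        have hroot : (V / (D * V ^ 2) ^ (1-θ)) ^ (1/θ) ≤ I := by
          have := Real.rpow_le_rpow (div_nonneg hV0 hW0.le) hdiv
            (le_of_lt (by positivity : (0:ℝ) < 1/θ))
          rw [one_div, Real.rpow_rpow_inv hIN hθne] at this
          rw [one_div]
          exact this
        apply le_trans ?_ hroot
        -- algebra: (V / (D V²)^(1-θ))^(1/θ) = (D^((2-p)/2))⁻¹ * V^(p/2)
        have hWsplit : (D * V ^ 2) ^ (1-θ) = D ^ (1-θ) * V ^ (2*(1-θ)) := by
          rw [Real.mul_rpow (le_of_lt hD0) (by positivity),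
            ← Real.rpow_natCast V 2, ← Real.rpow_mul (le_of_lt hVpos)]
          norm_num
        have hquot : V / (D * V ^ 2) ^ (1-θ) = D ^ (-(1-θ)) * V ^ (1 - 2*(1-θ)) := by
          rw [hWsplit, Real.rpow_neg (le_of_lt hD0), Real.rpow_sub hVpos, Real.rpow_one]
          rw [div_mul_eq_div_div_swap]
          ring
        have heq : (V / (D * V ^ 2) ^ (1-θ)) ^ (1/θ) = (D ^ ((2-p)/2))⁻¹ * V ^ (p/2) := by
          rw [hquot, Real.mul_rpow (Real.rpow_nonneg hD0.le _) (Real.rpow_nonneg hVpos.le _)]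
          rw [← Real.rpow_mul (le_of_lt hD0), ← Real.rpow_mul (le_of_lt hVpos)]
          have he1 : (-(1-θ)) * (1/θ) = -((2-p)/2) := by
            rw [hθ]; field_simp; ring
          have he2 : (1 - 2*(1-θ)) * (1/θ) = p/2 := by
            rw [hθ]; field_simp; ring
          rw [he1, he2, Real.rpow_neg (le_of_lt hD0)]
        rw [heq]
        apply mul_le_mul_of_nonneg_right ?_ (Real.rpow_nonneg hV0 _)
        rw [hA, hD]
        exact min_le_right _ _
  · -- UPPER BOUND
    rw [hI]
    set q : ℝ := 2 * (k:ℝ) / p with hq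
    have hq1 : 1 ≤ q := by
      rw [hq, le_div_iff₀ hp, one_mul]; exact hkp
    have hq0 : q ≠ 0 := by intro h; rw [h] at hq1; linarith
    have hmean := Real.rpow_arith_mean_le_arith_mean_rpow Finset.univ
      (fun _ : Fin m → Fin 2 => N⁻¹) (fun g => ‖T g‖ ^ p)
      (fun i _ => inv_nonneg.mpr hN0.le) hsumw
      (fun i _ => Real.rpow_nonneg (habs0 i) p) hq1
    have hpow : ∀ g : Fin m → Fin 2,
        (‖T g‖ ^ p) ^ q = ‖T g‖ ^ (2 * k : ℕ) := by
      intro g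
      rw [← Real.rpow_natCast (‖T g‖) (2 * k), ← Real.rpow_mul (habs0 g)]
      congr 1
      rw [hq]
      push_cast
      field_simp
    simp_rw [hpow] at hmean
    rw [← Finset.mul_sum, ← Finset.mul_sum] at hmean
    have hm2 : N⁻¹ * ∑ g : Fin m → Fin 2, ‖T g‖ ^ (2 * k : ℕ) ≤ Dk k * V ^ k := by
      have := complex_moment c k
      rw [← hV, ← hN] at this
      calc N⁻¹ * ∑ g : Fin m → Fin 2, ‖T g‖ ^ (2 * k : ℕ)
          ≤ N⁻¹ * (N * Dk k * V ^ k) := by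
            apply mul_le_mul_of_nonneg_left this (inv_nonneg.mpr hN0.le)
        _ = Dk k * V ^ k := by field_simp
    have hfinal : (N⁻¹ * ∑ g : Fin m → Fin 2, ‖T g‖ ^ p) ^ q ≤ Dk k * V ^ k :=
      le_trans hmean hm2
    -- take q-th root
    have hroot := Real.rpow_le_rpow (Real.rpow_nonneg hI0 q) hfinal (by positivity : (0:ℝ) ≤ q⁻¹)
    rw [Real.rpow_rpow_inv hI0 hq0] at hroot
    apply le_trans hroot
    have hDk0 : (0:ℝ) ≤ Dk k := le_of_lt (Dk_pos k)
    rw [Real.mul_rpow hDk0 (by positivity)]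
    have e1 : q⁻¹ = p / (2 * (k:ℝ)) := by
      rw [hq]; field_simp
    have e2 : (V ^ k : ℝ) ^ q⁻¹ = V ^ (p/2) := by
      rw [← Real.rpow_natCast V k, ← Real.rpow_mul hV0, e1]
      congr 1
      field_simp
    rw [e2, e1, ← hB]
end
end

section
/- Let μ be a positive Borel measure on the unit disk, 0 < p ≤ q < ∞, α > -1, and 0 < r < 1. If sup_{a∈𝔻} μ(Δ(a,r))/(1-|a|²)^{(2+α)q/p} < ∞, then for every s > 0 there is a constant C such that sup_{a∈𝔻} ∫_𝔻 (1-|a|²)^s / |1 - conj(a) z|^{(2+α)q/p + s} dμ(z) ≤ C. -/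
set_option maxHeartbeats 1000000

open MeasureTheory
open scoped ComplexConjugate ENNReal

noncomputable section

/-- The pseudo-hyperbolic ball `Δ(a,r)` in the unit disk. -/
def DeltaD (a : ℂ) (r : ℝ) : Set ℂ := {z : ℂ | ‖z‖ < 1 ∧ pseudoDistD a z < r}

lemma one_sub_abs_le {w : ℂ} : 1 - ‖w‖ ≤ ‖1 - w‖ := by
  have h := norm_add_le (1 - w) w
  simp at h
  linarith

lemma mem_DeltaD_of_close {b z : ℂ} {r : ℝ} (hb : ‖b‖ < 1) (hz : ‖z‖ < 1)
    (h : ‖z - b‖ < r * (1 - ‖b‖)) : z ∈ DeltaD b r := by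
  have hb0 := norm_nonneg b
  have hz0 := norm_nonneg z
  have h1 : (0:ℝ) < 1 - ‖b‖ := by linarith
  have hr : 0 < r := by nlinarith [norm_nonneg (z - b)]
  have hden : 1 - ‖b‖ ≤ ‖1 - conj z * b‖ := by
    calc 1 - ‖b‖ ≤ 1 - ‖conj z * b‖ := by
          rw [norm_mul, Complex.norm_conj]; nlinarith
      _ ≤ ‖1 - conj z * b‖ := one_sub_abs_le
  refine ⟨hz, ?_⟩
  rw [pseudoDistD, div_lt_iff₀ (lt_of_lt_of_le h1 hden)]
  calc ‖b - z‖ = ‖z - b‖ := by rw [← norm_neg]; ring_nf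
    _ < r * (1 - ‖b‖) := h
    _ ≤ r * ‖1 - conj z * b‖ := by nlinarith

lemma abs_one_sub_exp (θ : ℝ) :
    ‖1 - Complex.exp (θ * Complex.I)‖ = 2 * |Real.sin (θ / 2)| := by
  have h : ‖1 - Complex.exp (θ * Complex.I)‖ ^ 2 = (2 * |Real.sin (θ / 2)|) ^ 2 := by
    rw [Complex.exp_mul_I, ← Complex.ofReal_cos, ← Complex.ofReal_sin, Complex.sq_norm]
    have : (1 : ℂ) - ((Real.cos θ : ℂ) + (Real.sin θ : ℂ) * Complex.I) =
        Complex.mk (1 - Real.cos θ) (-Real.sin θ) := by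
      apply Complex.ext <;> simp [Complex.cos_ofReal_re, Complex.sin_ofReal_re]
    rw [this, Complex.normSq_mk]
    have hs : Real.sin (θ / 2) ^ 2 = 1 / 2 - Real.cos (2 * (θ/2)) / 2 := Real.sin_sq_eq_half_sub _
    rw [mul_pow, sq_abs]
    have : 2 * (θ / 2) = θ := by ring
    rw [this] at hs
    nlinarith [Real.sin_sq_add_cos_sq θ]
  have h1 := norm_nonneg (1 - Complex.exp (θ * Complex.I))
  have h2 : (0:ℝ) ≤ 2 * |Real.sin (θ / 2)| := by positivity
  nlinarith

lemma abs_exp_sub_exp (x y : ℝ) :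
    ‖Complex.exp (x * Complex.I) - Complex.exp (y * Complex.I)‖ ≤ |x - y| := by
  have : Complex.exp (x * Complex.I) - Complex.exp (y * Complex.I) =
      -(Complex.exp (y * Complex.I)) * (1 - Complex.exp ((x - y) * Complex.I)) := by
    rw [show ((x:ℂ) - y) * Complex.I = x * Complex.I + (-(y * Complex.I)) by push_cast; ring,
      Complex.exp_add, Complex.exp_neg]
    field_simp [Complex.exp_ne_zero]; ring
  rw [this, norm_mul, norm_neg, Complex.norm_exp_ofReal_mul_I, one_mul]
  rw [show ((x:ℂ) - y) * Complex.I = ((x - y : ℝ) : ℂ) * Complex.I by push_cast; ring,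
    abs_one_sub_exp]
  calc 2 * |Real.sin ((x - y) / 2)| ≤ 2 * |(x - y) / 2| := by
        have := Real.abs_sin_le_abs (x := (x - y)/2); linarith
    _ = |x - y| := by rw [abs_div]; simp; ring

open Real in
lemma abs_arg_le {w : ℂ} (hw : ‖w‖ ≤ 1) :
    |Complex.arg w| ≤ π / 2 * (‖1 - w‖ + (1 - ‖w‖)) := by
  set θ := Complex.arg w with hθ
  have h1 : ‖1 - Complex.exp (θ * Complex.I)‖ ≤
      ‖1 - w‖ + (1 - ‖w‖) := by
    have hw' : ‖w - Complex.exp (θ * Complex.I)‖ = 1 - ‖w‖ := by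
      conv_lhs => rw [← Complex.norm_mul_exp_arg_mul_I w]
      rw [← hθ, show (↑(‖w‖) * Complex.exp (↑θ * Complex.I) - Complex.exp (↑θ * Complex.I))
        = ((‖w‖ : ℂ) - 1) * Complex.exp (↑θ * Complex.I) by ring,
        norm_mul, Complex.norm_exp_ofReal_mul_I, mul_one,
        show ((‖w‖ : ℂ) - 1) = ((‖w‖ - 1 : ℝ) : ℂ) by push_cast; ring,
        Complex.norm_real, Real.norm_eq_abs, abs_of_nonpos (by linarith)]
      ring
    calc ‖1 - Complex.exp (θ * Complex.I)‖ ≤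
        ‖1 - w‖ + ‖w - Complex.exp (θ * Complex.I)‖ := by
          have := norm_add_le (1 - w) (w - Complex.exp (θ * Complex.I))
          simpa using this
      _ = ‖1 - w‖ + (1 - ‖w‖) := by rw [hw']
  have h2 : (2 / π) * |θ| ≤ ‖1 - Complex.exp (θ * Complex.I)‖ := by
    rw [abs_one_sub_exp]
    have hb : |θ / 2| ≤ π / 2 := by
      rw [abs_div]
      have := Complex.arg_le_pi w
      have := Complex.neg_pi_lt_arg w
      rw [abs_of_pos (by norm_num : (0:ℝ) < 2)]
      rw [div_le_div_iff₀ (by norm_num) (by norm_num)]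
      cases abs_cases θ <;> nlinarith
    have := Real.mul_abs_le_abs_sin hb
    rw [abs_div, abs_of_pos (by norm_num : (0:ℝ) < 2)] at this
    have hπ := Real.pi_pos
    calc (2/π) * |θ| = 2 * ((2/π) * (|θ|/2)) := by ring
      _ ≤ 2 * |Real.sin (θ/2)| := by linarith
  have hπ := Real.pi_pos
  have : (2/π) * |θ| ≤ ‖1 - w‖ + (1 - ‖w‖) := le_trans h2 h1
  calc |θ| = (π/2) * ((2/π) * |θ|) := by field_simp
    _ ≤ _ := by apply mul_le_mul_of_nonneg_left this; positivity

open Real in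
lemma cover_bound (μ : Measure ℂ) (r t M : ℝ) (hr0 : 0 < r) (hr1 : r < 1) (ht : 1 < t)
    (hcar : ∀ b : ℂ, ‖b‖ < 1 →
      μ (DeltaD b r) ≤ ENNReal.ofReal (M * (1 - ‖b‖ ^ 2) ^ t)) :
    ∃ K : ℝ, ∀ a : ℂ, ‖a‖ < 1 → ∀ ρ : ℝ, 0 < ρ →
      μ {z : ℂ | ‖z‖ < 1 ∧ ‖1 - conj a * z‖ < ρ} ≤
        ENNReal.ofReal (K * ρ ^ t) := by
  have hπ := Real.pi_pos
  set β : ℝ := 1 - r / 4 with hβdef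
  have hβ0 : 0 < β := by simp only [hβdef]; linarith
  have hβ1 : β < 1 := by simp only [hβdef]; linarith
  set γ : ℝ := β ^ (t - 1) with hγdef
  have hγ0 : 0 < γ := Real.rpow_pos_of_pos hβ0 _
  have hγ1 : γ < 1 := by
    apply Real.rpow_lt_one hβ0.le hβ1; linarith
  set M₀ : ℝ := max M 0 with hM₀def
  have hM₀ : 0 ≤ M₀ := le_max_right _ _
  refine ⟨(8 * π / r + 5) * M₀ * (2:ℝ) ^ t * (1 - γ)⁻¹, ?_⟩
  intro a ha ρ hρ
  set η : ℝ := min ρ 1 with hηdef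
  have hη0 : 0 < η := lt_min hρ one_pos
  have hη1 : η ≤ 1 := min_le_right _ _
  have hηρ : η ≤ ρ := min_le_left _ _
  set u : ℂ := if a = 0 then 1 else (‖a‖ : ℂ)⁻¹ * a with hudef
  have hu : ‖u‖ = 1 := by
    rw [hudef]
    split
    · simp
    · rename_i h
      rw [norm_mul, norm_inv, Complex.norm_real, Real.norm_eq_abs, abs_of_pos (norm_pos_iff.mpr h),
        inv_mul_cancel₀ (norm_ne_zero_iff.mpr h)]
  set θstep : ℕ → ℝ := fun m => r / 4 * (β ^ m * η) with hθstepdef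
  have hθstep0 : ∀ m, 0 < θstep m := fun m => by positivity
  set b : ℕ → ℤ → ℂ := fun m j =>
    ((1 - β ^ m * η : ℝ) : ℂ) * (u * Complex.exp (((j : ℝ) * θstep m : ℝ) * Complex.I))
    with hbdef
  have hβmη : ∀ m : ℕ, 0 < β ^ m * η ∧ β ^ m * η ≤ η := by
    intro m
    constructor
    · positivity
    · have : β ^ m ≤ 1 := pow_le_one₀ hβ0.le hβ1.le
      nlinarith
  have habsb : ∀ m j, ‖b m j‖ = 1 - β ^ m * η := by
    intro m j
    have h1 := (hβmη m).1
    have h2 := (hβmη m).2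
    rw [hbdef]
    simp only [norm_mul, Complex.norm_real, Real.norm_eq_abs, hu, Complex.norm_exp_ofReal_mul_I]
    rw [abs_of_nonneg (by linarith)]; ring
  have hbp : ∀ m j, ‖b m j‖ < 1 := by
    intro m j; rw [habsb]; have := (hβmη m).1; linarith
  set N : ℕ → ℕ := fun m => ⌈4 * π / r * (β ^ m)⁻¹⌉₊ + 1 with hNdef
  -- the covering
  have hcov : {z : ℂ | ‖z‖ < 1 ∧ ‖1 - conj a * z‖ < ρ} ⊆
      ⋃ (m : ℕ), ⋃ (j ∈ Finset.Icc (-(N m : ℤ)) ((N m : ℤ))), DeltaD (b m j) r := by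
    intro z hz
    obtain ⟨hz1, hz2⟩ := hz
    have hz0 := norm_nonneg z
    have ha0 := norm_nonneg a
    have hd0 : 0 < 1 - ‖z‖ := by linarith
    have hdρ : 1 - ‖z‖ < ρ := by
      have h1 : 1 - ‖conj a * z‖ ≤ ‖1 - conj a * z‖ := one_sub_abs_le
      have h2 : ‖conj a * z‖ ≤ ‖z‖ := by
        rw [norm_mul, Complex.norm_conj]; nlinarith
      linarith
    have hdη : 1 - ‖z‖ ≤ η := le_min hdρ.le (by linarith)
    set θz := Complex.arg (conj u * z) with hθzdef
    have hθz : |θz| ≤ π * η := by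
      rcases le_or_gt 1 ρ with h | h
      · have hη_eq : η = 1 := min_eq_right h
        rw [hη_eq, mul_one]
        exact Complex.abs_arg_le_pi _
      · have hη_eq : η = ρ := min_eq_left h.le
        have ha_ne : a ≠ 0 := by
          intro h0
          rw [h0] at hz2
          simp at hz2
          linarith
        have hapos : 0 < ‖a‖ := norm_pos_iff.mpr ha_ne
        have harg : Complex.arg (conj a * z) = θz := by
          rw [hθzdef, hudef, if_neg ha_ne]
          have heq : conj a * z =
              ((‖a‖ : ℝ) : ℂ) * (conj ((‖a‖ : ℂ)⁻¹ * a) * z) := by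
            rw [map_mul, map_inv₀, Complex.conj_ofReal]
            have hne : ((‖a‖ : ℝ) : ℂ) ≠ 0 :=
              Complex.ofReal_ne_zero.mpr (ne_of_gt hapos)
            field_simp
          rw [heq, Complex.arg_real_mul _ hapos]
        have hwabs : ‖conj a * z‖ ≤ 1 := by
          rw [norm_mul, Complex.norm_conj]; nlinarith
        have hble := abs_arg_le hwabs
        rw [harg] at hble
        have h1 : 1 - ‖conj a * z‖ ≤ ‖1 - conj a * z‖ := one_sub_abs_le
        calc |θz| ≤ π / 2 * (‖1 - conj a * z‖ + (1 - ‖conj a * z‖)) :=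
              hble
          _ ≤ π / 2 * (ρ + ρ) := by
              apply mul_le_mul_of_nonneg_left _ (by positivity)
              linarith
          _ = π * η := by rw [hη_eq]; ring
    have hex : ∃ n : ℕ, β ^ (n + 1) * η < 1 - ‖z‖ := by
      obtain ⟨n, hn⟩ := exists_pow_lt_of_lt_one
        (show (0:ℝ) < (1 - ‖z‖) / η by positivity) hβ1
      refine ⟨n, ?_⟩
      have hb1 : β ^ (n + 1) ≤ β ^ n := by
        apply pow_le_pow_of_le_one hβ0.le hβ1.le
        omega
      have hn' : β ^ n * η < 1 - ‖z‖ := by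
        rw [lt_div_iff₀ hη0] at hn
        exact hn
      nlinarith
    set m := Nat.find hex with hmdef
    have hm1 : β ^ (m + 1) * η < 1 - ‖z‖ := Nat.find_spec hex
    have hm2 : 1 - ‖z‖ ≤ β ^ m * η := by
      rcases Nat.eq_zero_or_pos m with h0 | h0
      · rw [h0, pow_zero, one_mul]; exact hdη
      · have hmin := Nat.find_min hex (show m - 1 < m by omega)
        rw [show m - 1 + 1 = m by omega] at hmin
        linarith [not_lt.mp hmin]
    set j := round (θz / θstep m) with hjdef
    have hstep := hθstep0 m
    have hjd : |θz - (j : ℝ) * θstep m| ≤ θstep m / 2 := by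
      have h := abs_sub_round (θz / θstep m)
      calc |θz - (j : ℝ) * θstep m| = θstep m * |θz / θstep m - (j : ℝ)| := by
            have key : θz - (j : ℝ) * θstep m = θstep m * (θz / θstep m - (j : ℝ)) := by
              field_simp
            rw [key, abs_mul, abs_of_pos hstep]
        _ ≤ θstep m * (1 / 2) := mul_le_mul_of_nonneg_left h hstep.le
        _ = θstep m / 2 := by ring
    have hjN : j ∈ Finset.Icc (-(N m : ℤ)) ((N m : ℤ)) := by
      rw [Finset.mem_Icc]
      have h1 : |(j : ℝ)| ≤ |θz / θstep m| + 1 / 2 := by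
        have h := abs_sub_round (θz / θstep m)
        have h' := abs_sub_abs_le_abs_sub ((j : ℝ)) (θz / θstep m)
        rw [abs_sub_comm (j:ℝ) (θz / θstep m)] at h'
        linarith
      have h2 : |θz / θstep m| ≤ 4 * π / r * (β ^ m)⁻¹ := by
        rw [abs_div, abs_of_pos hstep, div_le_iff₀ hstep]
        have heq : 4 * π / r * (β ^ m)⁻¹ * θstep m = π * η := by
          rw [hθstepdef]
          have : (β:ℝ) ^ m ≠ 0 := ne_of_gt (pow_pos hβ0 m)
          field_simp
        rw [heq]
        exact hθz
      have h3 : (4 * π / r * (β ^ m)⁻¹ : ℝ) ≤ (⌈4 * π / r * (β ^ m)⁻¹⌉₊ : ℝ) := Nat.le_ceil _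
      have h4 : ((N m : ℕ) : ℝ) = (⌈4 * π / r * (β ^ m)⁻¹⌉₊ : ℝ) + 1 := by
        rw [hNdef]; push_cast; ring
      have hjr : |(j : ℝ)| ≤ ((N m : ℕ) : ℝ) := by linarith
      have hjz : |j| ≤ ((N m : ℕ) : ℤ) := by
        rw [← Int.cast_abs] at hjr
        exact_mod_cast hjr
      exact abs_le.mp hjz
    refine Set.mem_iUnion.mpr ⟨m, Set.mem_iUnion.mpr ⟨j, Set.mem_iUnion.mpr ⟨hjN, ?_⟩⟩⟩
    apply mem_DeltaD_of_close (hbp m j) hz1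
    rw [habsb]
    have huu : u * conj u = 1 := by
      rw [Complex.mul_conj, Complex.normSq_eq_norm_sq, hu]
      norm_num
    have habs' : ‖conj u * z‖ = ‖z‖ := by
      rw [norm_mul, Complex.norm_conj, hu, one_mul]
    have hzu : z = u * (((‖z‖ : ℝ) : ℂ) * Complex.exp ((θz : ℝ) * Complex.I)) := by
      have h1 := Complex.norm_mul_exp_arg_mul_I (conj u * z)
      rw [habs'] at h1
      calc z = (u * conj u) * z := by rw [huu, one_mul]
        _ = u * (conj u * z) := by ring
        _ = u * (((‖z‖ : ℝ) : ℂ) * Complex.exp ((θz : ℝ) * Complex.I)) := by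
            rw [← h1]
    have hdiff : z - b m j = u *
        ((((‖z‖ : ℝ) : ℂ) * Complex.exp ((θz : ℝ) * Complex.I)) -
         (((1 - β ^ m * η : ℝ) : ℂ) * Complex.exp ((((j:ℝ) * θstep m : ℝ)) * Complex.I))) := by
      rw [hbdef]
      conv_lhs => rw [hzu]
      ring
    rw [hdiff, norm_mul, hu, one_mul]
    have hterm1 : ‖(((‖z‖ : ℝ) : ℂ) - ((1 - β ^ m * η : ℝ) : ℂ)) *
        Complex.exp ((θz : ℝ) * Complex.I)‖ < r / 4 * (β ^ m * η) := by
      rw [norm_mul, Complex.norm_exp_ofReal_mul_I, mul_one, ← Complex.ofReal_sub,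
        Complex.norm_real, Real.norm_eq_abs]
      rw [abs_of_nonneg (by linarith)]
      have hβm : β ^ (m + 1) = β * β ^ m := by ring
      have : β * β ^ m * η = β ^ m * η - r / 4 * (β ^ m * η) := by
        rw [hβdef]; ring
      rw [hβm, this] at hm1
      linarith
    have hterm2 : ‖((1 - β ^ m * η : ℝ) : ℂ) *
        (Complex.exp ((θz : ℝ) * Complex.I) -
         Complex.exp ((((j:ℝ) * θstep m : ℝ)) * Complex.I))‖ ≤ θstep m / 2 := by
      rw [norm_mul, Complex.norm_real, Real.norm_eq_abs]
      have hb1 := (hβmη m).1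
      have hb2 := (hβmη m).2
      have hle : |(1 - β ^ m * η : ℝ)| ≤ 1 := by
        rw [abs_of_nonneg (by linarith)]; linarith
      calc |(1 - β ^ m * η : ℝ)| *
          ‖Complex.exp ((θz : ℝ) * Complex.I) -
            Complex.exp ((((j:ℝ) * θstep m : ℝ)) * Complex.I)‖
          ≤ 1 * |θz - (j:ℝ) * θstep m| := by
            apply mul_le_mul hle (abs_exp_sub_exp _ _) (norm_nonneg _) one_pos.le
        _ ≤ θstep m / 2 := by rw [one_mul]; exact hjd
    calc ‖(((‖z‖ : ℝ) : ℂ) * Complex.exp ((θz : ℝ) * Complex.I)) -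
          (((1 - β ^ m * η : ℝ) : ℂ) * Complex.exp ((((j:ℝ) * θstep m : ℝ)) * Complex.I))‖
        ≤ ‖(((‖z‖ : ℝ) : ℂ) - ((1 - β ^ m * η : ℝ) : ℂ)) *
            Complex.exp ((θz : ℝ) * Complex.I)‖ +
          ‖((1 - β ^ m * η : ℝ) : ℂ) *
            (Complex.exp ((θz : ℝ) * Complex.I) -
             Complex.exp ((((j:ℝ) * θstep m : ℝ)) * Complex.I))‖ := by
          have := norm_add_le
            ((((‖z‖ : ℝ) : ℂ) - ((1 - β ^ m * η : ℝ) : ℂ)) *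
              Complex.exp ((θz : ℝ) * Complex.I))
            (((1 - β ^ m * η : ℝ) : ℂ) *
              (Complex.exp ((θz : ℝ) * Complex.I) -
               Complex.exp ((((j:ℝ) * θstep m : ℝ)) * Complex.I)))
          convert this using 2
          · rfl
          · ring
      _ < r * (1 - (1 - β ^ m * η)) := by
          have hstep_le : θstep m / 2 ≤ r / 8 * (β ^ m * η) := by
            rw [hθstepdef]; ring_nf; linarith [le_refl (r * (β ^ m * η) / 8)]
          have hb1 := (hβmη m).1
          have : 1 - (1 - β ^ m * η) = β ^ m * η := by ring
          rw [this]
          nlinarith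
  -- measure estimate
  calc μ {z : ℂ | ‖z‖ < 1 ∧ ‖1 - conj a * z‖ < ρ}
      ≤ μ (⋃ (m : ℕ), ⋃ (j ∈ Finset.Icc (-(N m : ℤ)) ((N m : ℤ))), DeltaD (b m j) r) :=
        measure_mono hcov
    _ ≤ ∑' m : ℕ, μ (⋃ (j ∈ Finset.Icc (-(N m : ℤ)) ((N m : ℤ))), DeltaD (b m j) r) :=
        measure_iUnion_le _
    _ ≤ ∑' m : ℕ, ENNReal.ofReal (((8 * π / r + 5) * M₀ * (2:ℝ) ^ t * η ^ t) * γ ^ m) := by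
        apply ENNReal.tsum_le_tsum
        intro m
        have hβm1 : β ^ m ≤ 1 := pow_le_one₀ hβ0.le hβ1.le
        have hβm0 : (0:ℝ) < β ^ m := pow_pos hβ0 m
        have hpow : ((β ^ m : ℝ)) ^ t = γ ^ m * β ^ m := by
          rw [← Real.rpow_natCast β m, ← Real.rpow_mul hβ0.le]
          rw [show (m:ℝ) * t = (t - 1) * m + m by ring, Real.rpow_add hβ0,
            Real.rpow_mul hβ0.le, Real.rpow_natCast, Real.rpow_natCast]
        have hNb : (2 * (N m) + 1 : ℝ) ≤ (8 * π / r + 5) * (β ^ m)⁻¹ := by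
          have hx0 : (0:ℝ) ≤ 4 * π / r * (β ^ m)⁻¹ := by positivity
          have h1 : ((⌈4 * π / r * (β ^ m)⁻¹⌉₊ : ℝ)) < 4 * π / r * (β ^ m)⁻¹ + 1 :=
            Nat.ceil_lt_add_one hx0
          have h2 : (1:ℝ) ≤ (β ^ m)⁻¹ := (one_le_inv₀ hβm0).mpr hβm1
          have h3 : ((N m : ℝ)) < 4 * π / r * (β ^ m)⁻¹ + 2 := by
            rw [hNdef]; push_cast; linarith
          have h4 : 8 * π / r * 1 ≤ 8 * π / r * (β ^ m)⁻¹ :=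
            mul_le_mul_of_nonneg_left h2 (by positivity)
          have h5 : (8 * π / r + 5) * (β ^ m)⁻¹ = 8 * π / r * (β ^ m)⁻¹ + 5 * (β ^ m)⁻¹ := by
            ring
          have h6 : 8 * π / r * (β ^ m)⁻¹ = 2 * (4 * π / r * (β ^ m)⁻¹) := by ring
          linarith
        calc μ (⋃ (j ∈ Finset.Icc (-(N m : ℤ)) ((N m : ℤ))), DeltaD (b m j) r)
            ≤ ∑ j ∈ Finset.Icc (-(N m : ℤ)) ((N m : ℤ)), μ (DeltaD (b m j) r) :=
              measure_biUnion_finset_le _ _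
          _ ≤ ∑ j ∈ Finset.Icc (-(N m : ℤ)) ((N m : ℤ)),
              ENNReal.ofReal (M₀ * (2 * (β ^ m * η)) ^ t) := by
              apply Finset.sum_le_sum
              intro j _
              refine le_trans (hcar (b m j) (hbp m j)) (ENNReal.ofReal_le_ofReal ?_)
              have h1 := (hβmη m).1
              have h2 := (hβmη m).2
              have habs : 1 - ‖b m j‖ ^ 2 ≤ 2 * (β ^ m * η) := by
                rw [habsb]; nlinarith
              have habs0 : 0 ≤ 1 - ‖b m j‖ ^ 2 := by
                rw [habsb]; nlinarith
              have hrp : (1 - ‖b m j‖ ^ 2) ^ t ≤ (2 * (β ^ m * η)) ^ t :=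
                Real.rpow_le_rpow habs0 habs (by linarith)
              have hrp0 : (0:ℝ) ≤ (1 - ‖b m j‖ ^ 2) ^ t :=
                Real.rpow_nonneg habs0 t
              have hM : M ≤ M₀ := le_max_left _ _
              nlinarith [Real.rpow_nonneg (show (0:ℝ) ≤ 2 * (β ^ m * η) by positivity) t]
          _ = ((2 * (N m) + 1 : ℕ) : ℝ≥0∞) * ENNReal.ofReal (M₀ * (2 * (β ^ m * η)) ^ t) := by
              have hcard : ((N m : ℤ) + 1 - -(N m : ℤ)).toNat = 2 * N m + 1 := by omega
              rw [Finset.sum_const, Int.card_Icc, hcard, nsmul_eq_mul]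
          _ ≤ ENNReal.ofReal (((8 * π / r + 5) * M₀ * (2:ℝ) ^ t * η ^ t) * γ ^ m) := by
              rw [← ENNReal.ofReal_natCast, ← ENNReal.ofReal_mul (by positivity)]
              apply ENNReal.ofReal_le_ofReal
              have hmul : (2 * (β ^ m * η)) ^ t = (2:ℝ) ^ t * (γ ^ m * β ^ m * η ^ t) := by
                rw [show (2 * (β ^ m * η) : ℝ) = 2 * β ^ m * η by ring,
                  Real.mul_rpow (by positivity) hη0.le,
                  Real.mul_rpow (by norm_num) hβm0.le, hpow]
                ring
              have h2t : (0:ℝ) < (2:ℝ) ^ t := Real.rpow_pos_of_pos (by norm_num) t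
              have hηt : (0:ℝ) ≤ η ^ t := Real.rpow_nonneg hη0.le t
              have hγm : (0:ℝ) ≤ γ ^ m := by positivity
              have hall : (0:ℝ) ≤ M₀ * ((2:ℝ) ^ t * (γ ^ m * β ^ m * η ^ t)) :=
                mul_nonneg hM₀ (mul_nonneg h2t.le
                  (mul_nonneg (mul_nonneg hγm hβm0.le) hηt))
              have hkey : (8 * π / r + 5) * (β ^ m)⁻¹ *
                  (M₀ * ((2:ℝ) ^ t * (γ ^ m * β ^ m * η ^ t)))
                  = (8 * π / r + 5) * M₀ * (2:ℝ) ^ t * η ^ t * γ ^ m := by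
                field_simp
              calc ((2 * N m + 1 : ℕ) : ℝ) * (M₀ * (2 * (β ^ m * η)) ^ t)
                  = (2 * (N m : ℝ) + 1) * (M₀ * ((2:ℝ) ^ t * (γ ^ m * β ^ m * η ^ t))) := by
                    rw [hmul]; push_cast; ring
                _ ≤ (8 * π / r + 5) * (β ^ m)⁻¹ *
                    (M₀ * ((2:ℝ) ^ t * (γ ^ m * β ^ m * η ^ t))) :=
                    mul_le_mul_of_nonneg_right hNb hall
                _ = (8 * π / r + 5) * M₀ * (2:ℝ) ^ t * η ^ t * γ ^ m := hkey
    _ ≤ ENNReal.ofReal ((8 * π / r + 5) * M₀ * (2:ℝ) ^ t * (1 - γ)⁻¹ * ρ ^ t) := by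
        have hC₁ : (0:ℝ) ≤ (8 * π / r + 5) * M₀ * (2:ℝ) ^ t * η ^ t := by
          have := Real.rpow_nonneg hη0.le t
          have h2t : (0:ℝ) ≤ (2:ℝ) ^ t := Real.rpow_nonneg (by norm_num) t
          positivity
        have hgeo : ∑' m : ℕ, ENNReal.ofReal
            (((8 * π / r + 5) * M₀ * (2:ℝ) ^ t * η ^ t) * γ ^ m) =
            ENNReal.ofReal ((8 * π / r + 5) * M₀ * (2:ℝ) ^ t * η ^ t) *
              (1 - ENNReal.ofReal γ)⁻¹ := by
          rw [← ENNReal.tsum_geometric, ← ENNReal.tsum_mul_left]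
          congr 1
          ext m
          rw [← ENNReal.ofReal_pow hγ0.le, ← ENNReal.ofReal_mul hC₁]
        rw [hgeo]
        have hsub : (1 : ℝ≥0∞) - ENNReal.ofReal γ = ENNReal.ofReal (1 - γ) := by
          rw [ENNReal.ofReal_sub 1 hγ0.le, ENNReal.ofReal_one]
        rw [hsub, ← ENNReal.ofReal_inv_of_pos (by linarith), ← ENNReal.ofReal_mul hC₁]
        apply ENNReal.ofReal_le_ofReal
        have hηt : η ^ t ≤ ρ ^ t := Real.rpow_le_rpow hη0.le hηρ (by linarith)
        have hinv : (0:ℝ) ≤ (1 - γ)⁻¹ := inv_nonneg.mpr (by linarith)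
        have h2t : (0:ℝ) ≤ (2:ℝ) ^ t := Real.rpow_nonneg (by norm_num) t
        calc (8 * π / r + 5) * M₀ * (2:ℝ) ^ t * η ^ t * (1 - γ)⁻¹
            ≤ (8 * π / r + 5) * M₀ * (2:ℝ) ^ t * ρ ^ t * (1 - γ)⁻¹ := by
              apply mul_le_mul_of_nonneg_right _ hinv
              apply mul_le_mul_of_nonneg_left hηt
              have hpos : (0:ℝ) ≤ 8 * π / r + 5 := by positivity
              exact mul_nonneg (mul_nonneg hpos hM₀) h2t
          _ = (8 * π / r + 5) * M₀ * (2:ℝ) ^ t * (1 - γ)⁻¹ * ρ ^ t := by ring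

theorem carleson_ball_implies_berezin_bound (μ : Measure ℂ)
    (hsupp : μ {z : ℂ | 1 ≤ ‖z‖} = 0)
    (p q α r : ℝ) (hp : 0 < p) (hpq : p ≤ q) (hα : -1 < α) (hr0 : 0 < r) (hr1 : r < 1)
    (hcar : ∃ M : ℝ, ∀ a : ℂ, ‖a‖ < 1 →
      μ (DeltaD a r) ≤ ENNReal.ofReal (M * (1 - ‖a‖ ^ 2) ^ ((2 + α) * q / p))) :
    ∀ s : ℝ, 0 < s → ∃ C : ℝ,
      ∀ a : ℂ, ‖a‖ < 1 →
        (∫⁻ z in {z : ℂ | ‖z‖ < 1},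
            ENNReal.ofReal ((1 - ‖a‖ ^ 2) ^ s /
              ‖1 - conj a * z‖ ^ ((2 + α) * q / p + s)) ∂μ) ≤
          ENNReal.ofReal C := by
  obtain ⟨M, hM⟩ := hcar
  intro s hs
  set t := (2 + α) * q / p with htdef
  have ht : 1 < t := by
    have hqp : 1 ≤ q / p := (one_le_div hp).mpr hpq
    have htt : t = (2 + α) * (q / p) := by rw [htdef]; ring
    nlinarith
  obtain ⟨K, hK⟩ := cover_bound μ r t M hr0 hr1 ht hM
  set K₀ : ℝ := max K 0 with hK₀def
  have hK₀ : 0 ≤ K₀ := le_max_right _ _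
  set w : ℝ := (2:ℝ) ^ (-s) with hwdef
  have hw0 : 0 < w := Real.rpow_pos_of_pos two_pos _
  have hw1 : w < 1 := Real.rpow_lt_one_of_one_lt_of_neg one_lt_two (by linarith)
  refine ⟨K₀ * (2:ℝ) ^ (t + s) * (1 - w)⁻¹, ?_⟩
  intro a ha
  set δ : ℝ := 1 - ‖a‖ ^ 2 with hδdef
  have ha0 := norm_nonneg a
  have hδ0 : 0 < δ := by rw [hδdef]; nlinarith
  have hδ2 : δ ≤ 2 * (1 - ‖a‖) := by rw [hδdef]; nlinarith
  set A : ℕ → Set ℂ := fun n => {z : ℂ | ‖z‖ < 1 ∧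
    ‖1 - conj a * z‖ < 2 ^ n * δ ∧
    2 ^ n * δ / 2 ≤ ‖1 - conj a * z‖} with hAdef
  have hcover : {z : ℂ | ‖z‖ < 1} ⊆ ⋃ n, A n := by
    intro z hz
    have hz1 : ‖z‖ < 1 := hz
    have hX : 1 - ‖a‖ ≤ ‖1 - conj a * z‖ := by
      have h1 : 1 - ‖conj a * z‖ ≤ ‖1 - conj a * z‖ := one_sub_abs_le
      have h2 : ‖conj a * z‖ ≤ ‖a‖ := by
        rw [norm_mul, Complex.norm_conj]
        nlinarith [norm_nonneg z]
      linarith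
    have hX0 : δ / 2 ≤ ‖1 - conj a * z‖ := by linarith
    have hexn : ∃ n : ℕ, ‖1 - conj a * z‖ < 2 ^ n * δ := by
      obtain ⟨n, hn⟩ := pow_unbounded_of_one_lt (‖1 - conj a * z‖ / δ)
        (one_lt_two (α := ℝ))
      exact ⟨n, by rw [div_lt_iff₀ hδ0] at hn; linarith [hn]⟩
    set n := Nat.find hexn with hndef
    refine Set.mem_iUnion.mpr ⟨n, hz1, Nat.find_spec hexn, ?_⟩
    rcases Nat.eq_zero_or_pos n with h0 | h0
    · rw [h0]; norm_num; linarith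
    · have hmin := Nat.find_min hexn (show n - 1 < n by omega)
      have : (2:ℝ) ^ (n - 1) * δ ≤ ‖1 - conj a * z‖ := not_lt.mp hmin
      have hpow : (2:ℝ) ^ n = 2 * 2 ^ (n - 1) := by
        rw [← pow_succ']
        congr 1
        omega
      have h2eq : 2 * (2:ℝ) ^ (n - 1) * δ / 2 = 2 ^ (n - 1) * δ := by ring
      rw [hpow, h2eq]
      exact this
  have hrpow_calc : ∀ n : ℕ, δ ^ s / ((2:ℝ) ^ n * δ / 2) ^ (t + s) * (K₀ * ((2:ℝ) ^ n * δ) ^ t)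
      = K₀ * ((2:ℝ) ^ (t + s) * w ^ n) := by
    intro n
    have h2 : (0:ℝ) < 2 := two_pos
    have hP : (0:ℝ) < (2:ℝ) ^ n := by positivity
    rw [← Real.rpow_natCast (2:ℝ) n]
    set x : ℝ := (n : ℝ) with hxdef
    have e1 : ((2:ℝ) ^ x * δ / 2) ^ (t + s) = 2 ^ (x * (t + s)) * δ ^ (t + s) / 2 ^ (t + s) := by
      rw [Real.div_rpow (by positivity) h2.le, Real.mul_rpow (by positivity) hδ0.le,
        ← Real.rpow_mul h2.le]
    have e2 : ((2:ℝ) ^ x * δ) ^ t = 2 ^ (x * t) * δ ^ t := by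
      rw [Real.mul_rpow (by positivity) hδ0.le, ← Real.rpow_mul h2.le]
    have e3 : w ^ n = (2:ℝ) ^ (x * (-s)) := by
      rw [hwdef, ← Real.rpow_natCast ((2:ℝ) ^ (-s)) n, ← Real.rpow_mul h2.le, ← hxdef]
      ring_nf
    have a1 : (2:ℝ) ^ (x * (t + s)) = 2 ^ (x * t) * 2 ^ (x * s) := by
      rw [← Real.rpow_add h2]; ring_nf
    have a2 : δ ^ (t + s) = δ ^ t * δ ^ s := by rw [← Real.rpow_add hδ0]
    have a3 : (2:ℝ) ^ (x * (-s)) = ((2:ℝ) ^ (x * s))⁻¹ := by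
      rw [← Real.rpow_neg h2.le]; ring_nf
    rw [e1, e2, e3, a1, a2, a3]
    have n1 : (2:ℝ) ^ (x * t) ≠ 0 := ne_of_gt (Real.rpow_pos_of_pos h2 _)
    have n2 : (2:ℝ) ^ (x * s) ≠ 0 := ne_of_gt (Real.rpow_pos_of_pos h2 _)
    have n3 : (2:ℝ) ^ (t + s) ≠ 0 := ne_of_gt (Real.rpow_pos_of_pos h2 _)
    have n4 : δ ^ t ≠ 0 := ne_of_gt (Real.rpow_pos_of_pos hδ0 _)
    have n5 : δ ^ s ≠ 0 := ne_of_gt (Real.rpow_pos_of_pos hδ0 _)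
    field_simp
  calc (∫⁻ z in {z : ℂ | ‖z‖ < 1},
          ENNReal.ofReal (δ ^ s / ‖1 - conj a * z‖ ^ (t + s)) ∂μ)
      ≤ ∫⁻ z in ⋃ n, A n,
          ENNReal.ofReal (δ ^ s / ‖1 - conj a * z‖ ^ (t + s)) ∂μ :=
        lintegral_mono' (Measure.restrict_mono hcover le_rfl) le_rfl
    _ ≤ ∑' n : ℕ, ∫⁻ z in A n,
          ENNReal.ofReal (δ ^ s / ‖1 - conj a * z‖ ^ (t + s)) ∂μ :=
        lintegral_iUnion_le _ _
    _ ≤ ∑' n : ℕ, ENNReal.ofReal (K₀ * ((2:ℝ) ^ (t + s) * w ^ n)) := by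
        apply ENNReal.tsum_le_tsum
        intro n
        have hP : (0:ℝ) < (2:ℝ) ^ n * δ := by positivity
        have hc : ∀ z ∈ A n,
            ENNReal.ofReal (δ ^ s / ‖1 - conj a * z‖ ^ (t + s)) ≤
            ENNReal.ofReal (δ ^ s / ((2:ℝ) ^ n * δ / 2) ^ (t + s)) := by
          intro z hz
          obtain ⟨hz1, hz2, hz3⟩ := hz
          apply ENNReal.ofReal_le_ofReal
          apply div_le_div_of_nonneg_left (Real.rpow_nonneg hδ0.le s)
          · exact Real.rpow_pos_of_pos (div_pos hP two_pos) _
          · exact Real.rpow_le_rpow (div_pos hP two_pos).le hz3 (by linarith)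
        calc ∫⁻ z in A n,
              ENNReal.ofReal (δ ^ s / ‖1 - conj a * z‖ ^ (t + s)) ∂μ
            ≤ ∫⁻ _ in A n, ENNReal.ofReal (δ ^ s / ((2:ℝ) ^ n * δ / 2) ^ (t + s)) ∂μ :=
              setLIntegral_mono measurable_const hc
          _ = ENNReal.ofReal (δ ^ s / ((2:ℝ) ^ n * δ / 2) ^ (t + s)) * μ (A n) :=
              setLIntegral_const _ _
          _ ≤ ENNReal.ofReal (δ ^ s / ((2:ℝ) ^ n * δ / 2) ^ (t + s)) *
              ENNReal.ofReal (K₀ * ((2:ℝ) ^ n * δ) ^ t) := by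
              apply mul_le_mul_right
              calc μ (A n) ≤ μ {z : ℂ | ‖z‖ < 1 ∧
                    ‖1 - conj a * z‖ < 2 ^ n * δ} :=
                    measure_mono fun z hz => ⟨hz.1, hz.2.1⟩
                _ ≤ ENNReal.ofReal (K * ((2:ℝ) ^ n * δ) ^ t) := hK a ha _ hP
                _ ≤ ENNReal.ofReal (K₀ * ((2:ℝ) ^ n * δ) ^ t) := by
                    apply ENNReal.ofReal_le_ofReal
                    have := Real.rpow_nonneg hP.le t
                    nlinarith [le_max_left K (0:ℝ)]
          _ = ENNReal.ofReal (K₀ * ((2:ℝ) ^ (t + s) * w ^ n)) := by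
              rw [← ENNReal.ofReal_mul (by positivity), hrpow_calc n]
    _ ≤ ENNReal.ofReal (K₀ * (2:ℝ) ^ (t + s) * (1 - w)⁻¹) := by
        have hC₁ : (0:ℝ) ≤ K₀ * (2:ℝ) ^ (t + s) :=
          mul_nonneg hK₀ (Real.rpow_nonneg two_pos.le _)
        have hgeo : ∑' n : ℕ, ENNReal.ofReal (K₀ * ((2:ℝ) ^ (t + s) * w ^ n)) =
            ENNReal.ofReal (K₀ * (2:ℝ) ^ (t + s)) * (1 - ENNReal.ofReal w)⁻¹ := by
          rw [← ENNReal.tsum_geometric, ← ENNReal.tsum_mul_left]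
          congr 1
          ext n
          rw [← ENNReal.ofReal_pow hw0.le, ← ENNReal.ofReal_mul hC₁, mul_assoc]
        rw [hgeo]
        have hsub : (1 : ℝ≥0∞) - ENNReal.ofReal w = ENNReal.ofReal (1 - w) := by
          rw [ENNReal.ofReal_sub 1 hw0.le, ENNReal.ofReal_one]
        rw [hsub, ← ENNReal.ofReal_inv_of_pos (by linarith), ← ENNReal.ofReal_mul hC₁]
end
end

section
/- Let μ be a finite positive Borel measure on the unit disk satisfying the Carleson condition sup_{a} μ(Δ(a,r))/(1-|a|²)^{(2+α)λ} < ∞ for some fixed 0 < r < 1 and λ > 0, α > -1. Then limsup_{|a|→1} μ(Δ(a,r))/(1-|a|²)^{(2+α)λ} = limsup_{s→1} sup_{a∈𝔻} μ(Δ(a,r) ∩ {|z| ≥ s})/(1-|a|²)^{(2+α)λ}. -/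
open MeasureTheory
open scoped ComplexConjugate ENNReal

noncomputable section

/-- The filter of `a` in the unit disk with `|a| → 1`. -/
def toBoundary : Filter ℂ :=
  Filter.comap (fun a : ℂ => ‖a‖) (nhdsWithin 1 (Set.Iio 1))

/-- Points of the pseudo-hyperbolic ball are close to `a`. -/
lemma abs_lower_of_mem_DeltaD {a z : ℂ} {r : ℝ} (hr0 : 0 < r) (hr1 : r < 1)
    (ha : ‖a‖ < 1) (hz : z ∈ DeltaD a r) :
    ‖a‖ - r * (1 - ‖a‖ ^ 2) / (1 - r) < ‖z‖ := by
  obtain ⟨hz1, hz2⟩ := hz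
  have hD : (0:ℝ) < ‖1 - conj z * a‖ := by
    have h1 : ‖conj z * a‖ < 1 := by
      rw [norm_mul, Complex.norm_conj]
      nlinarith [norm_nonneg z, norm_nonneg a]
    have := norm_sub_norm_le 1 (conj z * a)
    simp only [norm_one] at this
    linarith
  have hlt : ‖a - z‖ < r * ‖1 - conj z * a‖ := by
    rw [pseudoDistD, div_lt_iff₀ hD] at hz2
    exact hz2
  have hDle : ‖1 - conj z * a‖
      ≤ (1 - ‖a‖ ^ 2) + ‖a‖ * ‖a - z‖ := by
    have hdecomp : (1 : ℂ) - conj z * a = (1 - conj a * a) + (conj a - conj z) * a := by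
      ring
    calc ‖1 - conj z * a‖
        ≤ ‖1 - conj a * a‖ + ‖(conj a - conj z) * a‖ := by
          rw [hdecomp]; exact norm_add_le _ _
      _ = (1 - ‖a‖ ^ 2) + ‖a‖ * ‖a - z‖ := by
          have h1 : (1 : ℂ) - conj a * a = ((1 - ‖a‖ ^ 2 : ℝ) : ℂ) := by
            rw [mul_comm, Complex.mul_conj, Complex.normSq_eq_norm_sq]
            push_cast; ring
          have h2 : conj a - conj z = conj (a - z) := by rw [map_sub]
          rw [h1, Complex.norm_real, Real.norm_eq_abs, norm_mul, h2, Complex.norm_conj,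
            abs_of_nonneg (by nlinarith [norm_nonneg a])]
          ring
  have habsnn := norm_nonneg (a - z)
  have hanneg := norm_nonneg a
  have hkey : ‖a - z‖ < r * (1 - ‖a‖ ^ 2) / (1 - r) := by
    rw [lt_div_iff₀ (by linarith : (0:ℝ) < 1 - r)]
    have h3 := mul_le_mul_of_nonneg_left hDle (le_of_lt hr0)
    have h4 : ‖a‖ * ‖a - z‖ ≤ ‖a - z‖ :=
      mul_le_of_le_one_left habsnn ha.le
    have h5 := mul_le_mul_of_nonneg_left h4 (le_of_lt hr0)
    nlinarith
  have htri : ‖a‖ - ‖z‖ ≤ ‖a - z‖ :=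
    norm_sub_norm_le a z
  linarith

lemma DeltaD_subset_tail {a : ℂ} {r s : ℝ} (hr0 : 0 < r) (hr1 : r < 1)
    (ha : ‖a‖ < 1)
    (hs : s ≤ ‖a‖ - r * (1 - ‖a‖ ^ 2) / (1 - r)) :
    DeltaD a r ⊆ {z : ℂ | s ≤ ‖z‖} := by
  intro z hz
  have := abs_lower_of_mem_DeltaD hr0 hr1 ha hz
  exact le_of_lt (lt_of_le_of_lt hs this)

lemma tendsto_real_toBoundary :
    Filter.Tendsto (fun t : ℝ => (t : ℂ)) (nhdsWithin 1 (Set.Iio 1)) toBoundary := by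
  rw [toBoundary, Filter.tendsto_comap_iff]
  have h0 : ((fun a : ℂ => ‖a‖) ∘ fun t : ℝ => (t : ℂ))
      =ᶠ[nhdsWithin (1:ℝ) (Set.Iio 1)] id := by
    have : Set.Ioo (0:ℝ) 1 ∈ nhdsWithin (1:ℝ) (Set.Iio 1) := by
      rw [mem_nhdsLT_iff_exists_Ioo_subset]
      exact ⟨0, by norm_num, subset_rfl⟩
    filter_upwards [this] with t ht
    simp [Complex.norm_real, abs_of_pos ht.1]
  exact Filter.Tendsto.congr' h0.symm Filter.tendsto_id

instance : toBoundary.NeBot := tendsto_real_toBoundary.neBot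

lemma eventually_toBoundary {P : ℝ → Prop}
    (h : ∀ᶠ t in nhdsWithin (1:ℝ) (Set.Iio 1), P t) :
    ∀ᶠ a in toBoundary, P (‖a‖) :=
  Filter.Eventually.comap h _

lemma eventually_abs_lt_one : ∀ᶠ a in toBoundary, ‖a‖ < 1 :=
  eventually_toBoundary self_mem_nhdsWithin

/-- The tail measure goes to zero. -/
lemma tail_small (μ : Measure ℂ) [IsFiniteMeasure μ]
    (hsupp : μ {z : ℂ | 1 ≤ ‖z‖} = 0) :
    ∀ ε : ℝ, 0 < ε → ∃ s₀ : ℝ, s₀ < 1 ∧ (μ {z : ℂ | s₀ ≤ ‖z‖}).toReal < ε := by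
  intro ε hε
  set A : ℕ → Set ℂ := fun n => {z : ℂ | 1 - 1 / (n + 1) ≤ ‖z‖} with hA
  have hmeas : ∀ n, NullMeasurableSet (A n) μ := by
    intro n
    exact (measurableSet_le measurable_const continuous_norm.measurable).nullMeasurableSet
  have hanti : Antitone A := by
    intro n m hnm z hz
    simp only [hA, Set.mem_setOf_eq] at hz ⊢
    have h1 : (1:ℝ) / (m + 1) ≤ 1 / (n + 1) := by
      apply one_div_le_one_div_of_le (by positivity)
      exact_mod_cast add_le_add_left (Nat.cast_le.mpr hnm) 1
    linarith
  have hinter : (⋂ n, A n) = {z : ℂ | 1 ≤ ‖z‖} := by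
    ext z
    simp only [Set.mem_iInter, hA, Set.mem_setOf_eq]
    constructor
    · intro h
      have htend : Filter.Tendsto (fun n : ℕ => 1 - 1 / ((n:ℝ) + 1)) Filter.atTop (nhds 1) := by
        have := tendsto_one_div_add_atTop_nhds_zero_nat (𝕜 := ℝ)
        have := (tendsto_const_nhds (x := (1:ℝ)) (f := Filter.atTop (α := ℕ))).sub this
        simpa using this
      exact le_of_tendsto' htend h
    · intro h n
      have : (0:ℝ) < 1 / (n + 1) := by positivity
      linarith
  have htend : Filter.Tendsto (μ ∘ A) Filter.atTop (nhds 0) := by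
    have := tendsto_measure_iInter_atTop hmeas hanti ⟨0, measure_ne_top μ _⟩
    rwa [hinter, hsupp] at this
  have hev : ∀ᶠ n in Filter.atTop, μ (A n) < ENNReal.ofReal ε := by
    exact htend.eventually_lt_const (by simpa using ENNReal.ofReal_pos.mpr hε)
  obtain ⟨n, hn⟩ := hev.exists
  refine ⟨1 - 1 / (n + 1), by
    have : (0:ℝ) < 1 / (n + 1) := by positivity
    linarith, ?_⟩
  exact ENNReal.toReal_lt_of_lt_ofReal hn

theorem limsup_carleson_eq_limsup_tail (μ : Measure ℂ) [IsFiniteMeasure μ]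
    (hsupp : μ {z : ℂ | 1 ≤ ‖z‖} = 0)
    (α lam r : ℝ) (hα : -1 < α) (hlam : 0 < lam) (hr0 : 0 < r) (hr1 : r < 1)
    (hcar : ∃ M : ℝ, ∀ a : ℂ, ‖a‖ < 1 →
      (μ (DeltaD a r)).toReal ≤ M * (1 - ‖a‖ ^ 2) ^ ((2 + α) * lam)) :
    Filter.limsup (fun a : ℂ =>
        (μ (DeltaD a r)).toReal / (1 - ‖a‖ ^ 2) ^ ((2 + α) * lam))
      toBoundary =
      Filter.limsup (fun s : ℝ =>
          sSup {x : ℝ | ∃ a : ℂ, ‖a‖ < 1 ∧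
            x = (μ (DeltaD a r ∩ {z : ℂ | s ≤ ‖z‖})).toReal /
              (1 - ‖a‖ ^ 2) ^ ((2 + α) * lam)})
        (nhdsWithin 1 (Set.Iio 1)) := by
  obtain ⟨M, hM⟩ := hcar
  set p : ℝ := (2 + α) * lam with hp_def
  have hp : 0 < p := by
    rw [hp_def]
    have h2 : (0:ℝ) < 2 + α := by linarith
    positivity
  set F : ℂ → ℝ := fun a => (μ (DeltaD a r)).toReal / (1 - ‖a‖ ^ 2) ^ p with hF_def
  set Fs : ℝ → ℂ → ℝ := fun s a =>
    (μ (DeltaD a r ∩ {z : ℂ | s ≤ ‖z‖})).toReal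
      / (1 - ‖a‖ ^ 2) ^ p with hFs_def
  set S : ℝ → Set ℝ := fun s => {x : ℝ | ∃ a : ℂ, ‖a‖ < 1 ∧ x = Fs s a} with hS_def
  set G : ℝ → ℝ := fun s => sSup (S s) with hG_def
  -- basic facts about denominators
  have hbase : ∀ a : ℂ, ‖a‖ < 1 → 0 < 1 - ‖a‖ ^ 2 := by
    intro a ha
    nlinarith [norm_nonneg a]
  have hden : ∀ a : ℂ, ‖a‖ < 1 → 0 < (1 - ‖a‖ ^ 2) ^ p := by
    intro a ha
    exact Real.rpow_pos_of_pos (hbase a ha) p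
  have hFle : ∀ a : ℂ, ‖a‖ < 1 → F a ≤ M := by
    intro a ha
    rw [hF_def]
    rw [div_le_iff₀ (hden a ha)]
    exact hM a ha
  have hF0 : ∀ a : ℂ, ‖a‖ < 1 → 0 ≤ F a := by
    intro a ha
    exact div_nonneg ENNReal.toReal_nonneg (le_of_lt (hden a ha))
  have hFsF : ∀ s : ℝ, ∀ a : ℂ, ‖a‖ < 1 → Fs s a ≤ F a := by
    intro s a ha
    exact div_le_div₀ ENNReal.toReal_nonneg
      (ENNReal.toReal_mono (measure_ne_top μ _) (measure_mono Set.inter_subset_left))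
      (hden a ha) le_rfl
  have hFs0 : ∀ s : ℝ, ∀ a : ℂ, ‖a‖ < 1 → 0 ≤ Fs s a := by
    intro s a ha
    exact div_nonneg ENNReal.toReal_nonneg (le_of_lt (hden a ha))
  have habs0 : ‖(0 : ℂ)‖ < 1 := by simp
  have hM0 : 0 ≤ M := by
    have := le_trans (hF0 0 habs0) (hFle 0 habs0)
    exact this
  have hSbdd : ∀ s : ℝ, BddAbove (S s) := by
    intro s
    refine ⟨M, ?_⟩
    rintro x ⟨a, ha, rfl⟩
    exact le_trans (hFsF s a ha) (hFle a ha)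
  have hSne : ∀ s : ℝ, (S s).Nonempty := fun s => ⟨Fs s 0, 0, habs0, rfl⟩
  have hG0 : ∀ s : ℝ, 0 ≤ G s := by
    intro s
    exact le_trans (hFs0 s 0 habs0) (le_csSup (hSbdd s) ⟨0, habs0, rfl⟩)
  have hGM : ∀ s : ℝ, G s ≤ M := by
    intro s
    apply csSup_le (hSne s)
    rintro x ⟨a, ha, rfl⟩
    exact le_trans (hFsF s a ha) (hFle a ha)
  have hFbdd : Filter.IsBoundedUnder (· ≤ ·) toBoundary F := by
    refine ⟨M, ?_⟩
    rw [Filter.eventually_map]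
    exact eventually_abs_lt_one.mono fun a ha => hFle a ha
  have hFcobdd : Filter.IsCoboundedUnder (· ≤ ·) toBoundary F :=
    Filter.isCoboundedUnder_le_of_eventually_le _
      (eventually_abs_lt_one.mono fun a ha => hF0 a ha)
  -- the function controlling how deep Δ(a,r) is
  have hphi : Filter.Tendsto (fun t : ℝ => t - r * (1 - t ^ 2) / (1 - r))
      (nhdsWithin 1 (Set.Iio 1)) (nhds 1) := by
    have hc : Continuous (fun t : ℝ => t - r * (1 - t ^ 2) / (1 - r)) := by
      fun_prop
    have := hc.tendsto' 1 1 (by norm_num)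
    exact this.mono_left nhdsWithin_le_nhds
  -- Step 1: limsup F ≤ G s for each s < 1
  have key1 : ∀ s : ℝ, s < 1 → Filter.limsup F toBoundary ≤ G s := by
    intro s hs
    apply Filter.limsup_le_of_le hFcobdd
    have hev1 : ∀ᶠ t in nhdsWithin (1:ℝ) (Set.Iio 1),
        s < t - r * (1 - t ^ 2) / (1 - r) := hphi.eventually (eventually_gt_nhds hs)
    filter_upwards [eventually_abs_lt_one, eventually_toBoundary hev1] with a ha hsa
    have hsub : DeltaD a r ⊆ {z : ℂ | s ≤ ‖z‖} :=
      DeltaD_subset_tail hr0 hr1 ha (le_of_lt hsa)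
    have heq : DeltaD a r ∩ {z : ℂ | s ≤ ‖z‖} = DeltaD a r :=
      Set.inter_eq_self_of_subset_left hsub
    have : F a = Fs s a := by
      rw [hF_def, hFs_def]; simp only [heq]
    rw [this]
    exact le_csSup (hSbdd s) ⟨a, ha, rfl⟩
  -- Step 2: limsup F ≤ limsup G
  have hle1 : Filter.limsup F toBoundary ≤ Filter.limsup G (nhdsWithin 1 (Set.Iio 1)) := by
    apply Filter.le_limsup_of_frequently_le
    · apply Filter.Eventually.frequently
      filter_upwards [self_mem_nhdsWithin] with s hs
      exact key1 s hs
    · exact Filter.isBoundedUnder_of ⟨M, hGM⟩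
  -- Step 3: limsup G ≤ limsup F
  set L : ℝ := Filter.limsup F toBoundary with hL_def
  have hL0 : 0 ≤ L := by
    apply Filter.le_limsup_of_frequently_le
    · exact (eventually_abs_lt_one.mono fun a ha => hF0 a ha).frequently
    · exact hFbdd
  have hle2 : Filter.limsup G (nhdsWithin 1 (Set.Iio 1)) ≤ L := by
    apply le_of_forall_pos_le_add
    intro ε hε
    have hLlt : L < L + ε := by linarith
    have hevF : ∀ᶠ a in toBoundary, F a < L + ε :=
      Filter.eventually_lt_of_limsup_lt hLlt hFbdd
    rw [toBoundary, Filter.eventually_comap] at hevF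
    obtain ⟨U, hU, hU2⟩ := Filter.eventually_iff_exists_mem.mp hevF
    obtain ⟨l, hl, hIoo⟩ := mem_nhdsLT_iff_exists_Ioo_subset.mp hU
    set t₀ : ℝ := max l 0 with ht₀_def
    have ht₀1 : t₀ < 1 := by
      simp only [ht₀_def, max_lt_iff]
      exact ⟨hl, one_pos⟩
    have ht₀0 : 0 ≤ t₀ := le_max_right _ _
    have hIoo' : Set.Ioo t₀ 1 ⊆ U := fun x hx => hIoo ⟨lt_of_le_of_lt (le_max_left _ _) hx.1, hx.2⟩
    set c : ℝ := (1 - t₀ ^ 2) ^ p with hc_def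
    have hc : 0 < c := Real.rpow_pos_of_pos (by nlinarith) p
    obtain ⟨s₀, hs₀1, hs₀μ⟩ := tail_small μ hsupp (ε * c) (by positivity)
    have hGbound : ∀ s : ℝ, s₀ ≤ s → G s ≤ L + ε := by
      intro s hs
      apply csSup_le (hSne s)
      rintro x ⟨a, ha, rfl⟩
      rcases le_or_gt (‖a‖) t₀ with hat | hat
      · -- a away from the boundary: numerator is small
        have hnum : (μ (DeltaD a r ∩ {z : ℂ | s ≤ ‖z‖})).toReal ≤ ε * c := by
          have hsub : DeltaD a r ∩ {z : ℂ | s ≤ ‖z‖} ⊆ {z : ℂ | s₀ ≤ ‖z‖} :=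
            fun z hz => le_trans hs hz.2
          exact le_trans (ENNReal.toReal_mono (measure_ne_top μ _) (measure_mono hsub)) hs₀μ.le
        have hdenc : c ≤ (1 - ‖a‖ ^ 2) ^ p := by
          apply Real.rpow_le_rpow (by nlinarith) (by nlinarith [norm_nonneg a]) hp.le
        have : Fs s a ≤ (ε * c) / c := div_le_div₀ (by positivity) hnum hc hdenc
        rw [mul_div_cancel_right₀ _ (ne_of_gt hc)] at this
        linarith
      · -- a near the boundary: use the eventual bound for F
        have hUa : ‖a‖ ∈ U := hIoo' ⟨hat, ha⟩
        have hFa : F a < L + ε := hU2 _ hUa a rfl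
        exact le_trans (hFsF s a ha) hFa.le
    have hevG : ∀ᶠ s in nhdsWithin (1:ℝ) (Set.Iio 1), G s ≤ L + ε := by
      have : ∀ᶠ s in nhds (1:ℝ), s₀ < s := eventually_gt_nhds hs₀1
      filter_upwards [this.filter_mono nhdsWithin_le_nhds] with s hs
      exact hGbound s hs.le
    exact Filter.limsup_le_of_le
      (Filter.isCoboundedUnder_le_of_eventually_le _
        (Filter.Eventually.of_forall hG0)) hevG
  exact le_antisymm hle1 hle2
end
end
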